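/- arXiv:1206.1143 — 3 statements merged into one kernel-verified Lean document; each statement's English description precedes it below -/
import Mathlib

section
/- There exists k ∈ ℕ such that every horizontal geodesic of the induced augmented tree (X, 𝔈) has length at most k; that is, the lengths of horizontal geodesics are uniformly bounded. -/
open Metric Set Filter

attribute [local instance] Classical.propDecidable

noncomputable section

namespace MoranPaper

/-- Points of `ℝ^d`. -/
abbrev Pt (d : ℕ) := EuclideanSpace ℝ (Fin d)

/-- `w` is an admissible word: the letter at (0-indexed) position `j`
(corresponding to step `j+1`) lies in `[1, n j]`, where `n j` encodes `n_{j+1}`. -/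
def IsWord (n : ℕ → ℕ) (w : List ℕ) : Prop :=
  ∀ j (h : j < w.length), 1 ≤ w.get ⟨j, h⟩ ∧ w.get ⟨j, h⟩ ≤ n j

/-- The set `D_k` of words of length `k`. -/
def WordsLen (n : ℕ → ℕ) (k : ℕ) : Set (List ℕ) := {w | IsWord n w ∧ w.length = k}

/-- A Moran structure on the data `(J, (n_k), (r_k))`:  a family of sets `J_w`
indexed by words, with `J_∅ = J`, each `J_w` a similar copy of `J`, children
contained in the parent with pairwise disjoint interiors, and prescribed
diameter ratios. -/
structure MoranStructure (d : ℕ) (J : Set (Pt d)) (n : ℕ → ℕ) (r : ℕ → ℝ) where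
  Jset : List ℕ → Set (Pt d)
  root_eq : Jset [] = J
  similar : ∀ w, IsWord n w → ∃ (S : Pt d → Pt d) (c : ℝ), 0 < c ∧
      (∀ x y, dist (S x) (S y) = c * dist x y) ∧ Jset w = S '' J
  nested : ∀ w, IsWord n w → ∀ a, 1 ≤ a → a ≤ n w.length →
      Jset (w ++ [a]) ⊆ Jset w
  disjoint_int : ∀ w, IsWord n w → ∀ a b, 1 ≤ a → a ≤ n w.length →
      1 ≤ b → b ≤ n w.length → a ≠ b →
      interior (Jset (w ++ [a])) ∩ interior (Jset (w ++ [b])) = ∅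
  diam_ratio : ∀ w, IsWord n w → ∀ a, 1 ≤ a → a ≤ n w.length →
      Metric.diam (Jset (w ++ [a])) = r w.length * Metric.diam (Jset w)

/-- Standing hypotheses on the Moran data; `R` plays the role of `r = inf_k r_k > 0`. -/
structure MoranData (d : ℕ) (J : Set (Pt d)) (n : ℕ → ℕ) (r : ℕ → ℝ) (R : ℝ) : Prop where
  dim_pos : 1 ≤ d
  compact : IsCompact J
  int_nonempty : (interior J).Nonempty
  two_le : ∀ k, 2 ≤ n k
  r_pos : ∀ k, 0 < r k
  r_lt_one : ∀ k, r k < 1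
  nr_le : ∀ k, (n k : ℝ) * r k ≤ 1
  R_pos : 0 < R
  R_inf : R = ⨅ k, r k

/-- The Moran set `E = ⋂_k ⋃_{w ∈ D_k} J_w`. -/
def MoranSet {d : ℕ} {J : Set (Pt d)} {n : ℕ → ℕ} {r : ℕ → ℝ}
    (M : MoranStructure d J n r) : Set (Pt d) :=
  ⋂ k, ⋃ w ∈ WordsLen n k, M.Jset w

/-- The product `r_1 ⋯ r_k`. -/
def prodR (r : ℕ → ℝ) (k : ℕ) : ℝ := ∏ j ∈ Finset.range k, r j

/-- The level `X_m`:  `X_0 = {∅}`, and for `m ≥ 1`,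
`X_m = {w : r_1⋯r_k ≤ R^m < r_1⋯r_{k-1}}` where `k` is the length of `w`. -/
def XLevel (n : ℕ → ℕ) (r : ℕ → ℝ) (R : ℝ) (m : ℕ) : Set (List ℕ) :=
  if m = 0 then {([] : List ℕ)}
  else {w | IsWord n w ∧ prodR r w.length ≤ R ^ m ∧ R ^ m < prodR r (w.length - 1)}

/-- The vertex set `X = ⋃_m X_m`. -/
def XV (n : ℕ → ℕ) (r : ℕ → ℝ) (R : ℝ) : Set (List ℕ) := ⋃ m, XLevel n r R m

/-- `v` is the parent (first ancestor) of `u`:  `v` is the initial segment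
of `u` lying one level above `u`. -/
def IsParent (n : ℕ → ℕ) (r : ℕ → ℝ) (R : ℝ) (v u : List ℕ) : Prop :=
  v ≠ u ∧ v <+: u ∧ ∃ m, 1 ≤ m ∧ u ∈ XLevel n r R m ∧ v ∈ XLevel n r R (m - 1)

/-- Vertical edge relation `𝔈_v` (as an unordered relation). -/
def Evert (n : ℕ → ℕ) (r : ℕ → ℝ) (R : ℝ) (u v : List ℕ) : Prop :=
  IsParent n r R u v ∨ IsParent n r R v u

variable {d : ℕ} {J : Set (Pt d)} {n : ℕ → ℕ} {r : ℕ → ℝ}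

/-- Horizontal edge relation `𝔈_h`: distinct words on a common level `X_m`, `m ≥ 1`,
whose Moran pieces intersect. -/
def Ehor (M : MoranStructure d J n r) (R : ℝ) (u v : List ℕ) : Prop :=
  u ≠ v ∧ ∃ m, 1 ≤ m ∧ u ∈ XLevel n r R m ∧ v ∈ XLevel n r R m ∧
    (M.Jset u ∩ M.Jset v).Nonempty

/-- The induced augmented tree `(X, 𝔈)`, `𝔈 = 𝔈_v ∪ 𝔈_h`, as a graph on all words
(words outside `X` are isolated vertices). -/
def AugGraph (M : MoranStructure d J n r) (R : ℝ) : SimpleGraph (List ℕ) where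
  Adj u v := Evert n r R u v ∨ Ehor M R u v
  symm := by
    constructor
    rintro u v (h | ⟨hne, m, hm, hu, hv, hJ⟩)
    · exact Or.inl h.symm
    · exact Or.inr ⟨hne.symm, m, hm, hv, hu, by rwa [Set.inter_comm]⟩
  loopless := by
    constructor
    rintro u ((⟨h, -⟩ | ⟨h, -⟩) | ⟨h, -⟩) <;> exact h rfl

/-- The tree `(X, 𝔈_v)` with only the vertical edges. -/
def TreeGraph (n : ℕ → ℕ) (r : ℕ → ℝ) (R : ℝ) : SimpleGraph (List ℕ) where
  Adj u v := Evert n r R u v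
  symm := ⟨fun _ _ h => h.symm⟩
  loopless := by constructor; rintro u (⟨h, -⟩ | ⟨h, -⟩) <;> exact h rfl

/-- The graph `(X, 𝔈_h)` with only the horizontal edges. -/
def HorGraph (M : MoranStructure d J n r) (R : ℝ) : SimpleGraph (List ℕ) where
  Adj u v := Ehor M R u v
  symm := by
    constructor
    rintro u v ⟨hne, m, hm, hu, hv, hJ⟩
    exact ⟨hne.symm, m, hm, hv, hu, by rwa [Set.inter_comm]⟩
  loopless := by constructor; rintro u ⟨h, -⟩; exact h rfl

/-- Gromov product `⟨x,y⟩ = (d(o,x) + d(o,y) - d(x,y))/2` with respect to a base point `o`. -/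
def gromovD {V : Type*} (G : SimpleGraph V) (o x y : V) : ℝ :=
  ((G.dist o x : ℝ) + (G.dist o y : ℝ) - (G.dist x y : ℝ)) / 2

/-- Condition (H): there is `C' > 0` such that on every level `X_m` (`m ≥ 1`),
two pieces either intersect or are at distance at least `C' R^m`. -/
def CondH (M : MoranStructure d J n r) (R : ℝ) : Prop :=
  ∃ C' : ℝ, 0 < C' ∧ ∀ m, 1 ≤ m → ∀ u ∈ XLevel n r R m, ∀ v ∈ XLevel n r R m,
    (M.Jset u ∩ M.Jset v).Nonempty ∨
    ∀ p ∈ M.Jset u, ∀ q ∈ M.Jset v, C' * R ^ m ≤ dist p q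

/-- `T` is a horizontal connected component: a maximal subset of some level `X_m`
which is connected in the horizontal graph. -/
def IsHCC (M : MoranStructure d J n r) (R : ℝ) (T : Set (List ℕ)) : Prop :=
  ∃ m, T ⊆ XLevel n r R m ∧ ((HorGraph M R).induce T).Connected ∧
    ∀ T', T ⊆ T' → T' ⊆ XLevel n r R m → ((HorGraph M R).induce T').Connected → T' = T

/-- The common suffix set `Σ_m` of the level `X_m`: words `w` with `uw ∈ X_{m+1}`
for (some, equivalently all) `u ∈ X_m`. -/
def SigmaSet (n : ℕ → ℕ) (r : ℕ → ℝ) (R : ℝ) (m : ℕ) : Set (List ℕ) :=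
  {w | ∃ u ∈ XLevel n r R m, u ++ w ∈ XLevel n r R (m + 1)}

/-- The offspring set `TΣ_m ⊆ X_{m+1}` of a set `T ⊆ X_m`. -/
def TSigma (n : ℕ → ℕ) (r : ℕ → ℝ) (R : ℝ) (m : ℕ) (T : Set (List ℕ)) : Set (List ℕ) :=
  {x | ∃ u ∈ T, ∃ w ∈ SigmaSet n r R m, x = u ++ w}

/-- The augmented tree is rearrangeable:  horizontal connected components have
uniformly bounded cardinality, and for every horizontal connected component `T ⊆ X_m`
with `#T = b`, the offspring set `TΣ_m` can be partitioned into `b` groups (indexed by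
the elements of `T`), each group being a union of horizontal connected components and
having exactly `#Σ_m` elements. -/
def Rearrangeable (M : MoranStructure d J n r) (R : ℝ) : Prop :=
  (∃ L : ℕ, ∀ T, IsHCC M R T → T.Finite ∧ T.ncard ≤ L) ∧
  ∀ m T, T ⊆ XLevel n r R m → IsHCC M R T →
    ∃ g : List ℕ → List ℕ,
      (∀ x ∈ TSigma n r R m T, g x ∈ T) ∧
      (∀ Z, IsHCC M R Z → Z ⊆ TSigma n r R m T → ∀ x ∈ Z, ∀ y ∈ Z, g x = g y) ∧
      (∀ i ∈ T, {x ∈ TSigma n r R m T | g x = i}.ncard = (SigmaSet n r R m).ncard)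

/-- `C` is a (topological) connected component of `A`. -/
def IsRelCC {α : Type*} [TopologicalSpace α] (C A : Set α) : Prop :=
  ∃ x ∈ A, C = connectedComponentIn A x

/-- Condition (v): there is `L` such that any `T ⊆ D_{k-1}` for which `⋃_{i∈T} J_i`
is a connected component of `⋃_{i∈D_{k-1}} J_i` satisfies `#T ≤ L`. -/
def CondV (M : MoranStructure d J n r) : Prop :=
  ∃ L : ℕ, ∀ k, 1 ≤ k → ∀ T ⊆ WordsLen n (k - 1),
    IsRelCC (⋃ i ∈ T, M.Jset i) (⋃ i ∈ WordsLen n (k - 1), M.Jset i) →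
    T.Finite ∧ T.ncard ≤ L

/-- Condition (vi): for any such `T` (with `#T = b`), the connected components of
`⋃_{i∈T} ⋃_{j=1}^{n_k} J_{ij}` can be partitioned into `b` groups (indexed by the
elements of `T`) so that the union of the components in each group is a union of
exactly `n_k` of the sets `J_{ij}`. -/
def CondVI (M : MoranStructure d J n r) : Prop :=
  ∀ k, 1 ≤ k → ∀ T ⊆ WordsLen n (k - 1),
    IsRelCC (⋃ i ∈ T, M.Jset i) (⋃ i ∈ WordsLen n (k - 1), M.Jset i) →
    ∃ f : Set (Pt d) → List ℕ,
      (∀ C, IsRelCC C (⋃ u ∈ T, ⋃ j ∈ Set.Icc 1 (n (k - 1)), M.Jset (u ++ [j])) → f C ∈ T) ∧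
      ∀ i ∈ T, ∃ W : Finset (List ℕ × ℕ),
        (∀ p ∈ W, p.1 ∈ T ∧ 1 ≤ p.2 ∧ p.2 ≤ n (k - 1)) ∧
        W.card = n (k - 1) ∧
        (⋃ C ∈ {C | IsRelCC C (⋃ u ∈ T, ⋃ j ∈ Set.Icc 1 (n (k - 1)), M.Jset (u ++ [j]))
            ∧ f C = i}, C)
          = ⋃ p ∈ W, M.Jset (p.1 ++ [p.2])

/-- A geodesic ray of the induced augmented tree: `u_m ∈ X_m` and `u_m = (u_{m+1})⁻¹`. -/
def IsRay (n : ℕ → ℕ) (r : ℕ → ℝ) (R : ℝ) (u : ℕ → List ℕ) : Prop :=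
  (∀ m, u m ∈ XLevel n r R m) ∧ ∀ m, IsParent n r R (u m) (u (m + 1))

/-- Geodesic rays as a type. -/
def MRay (n : ℕ → ℕ) (r : ℕ → ℝ) (R : ℝ) := {u : ℕ → List ℕ // IsRay n r R u}

/-- `t(ξ,η) = liminf_m ⟨u_m, v_m⟩`, valued in `EReal`. -/
def tLim {V : Type*} (G : SimpleGraph V) (o : V) (u v : ℕ → V) : EReal :=
  Filter.liminf (fun m => ((gromovD G o (u m) (v m) : ℝ) : EReal)) Filter.atTop

/-- `R ^ t` for `t ∈ EReal`, with the convention `R ^ ∞ = 0`. -/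
def rpowE (R : ℝ) (t : EReal) : ℝ := if t = ⊤ then 0 else R ^ t.toReal

/-- The hyperbolic boundary of the induced augmented tree: equivalence classes of
geodesic rays, two rays being equivalent when `t(ξ,η) = ∞`. -/
def MBoundary (M : MoranStructure d J n r) (R : ℝ) :=
  Quot (fun ξ η : MRay n r R => tLim (AugGraph M R) [] ξ.1 η.1 = ⊤)

/-- The class of a ray in the hyperbolic boundary. -/
def mkB (M : MoranStructure d J n r) (R : ℝ) (ξ : MRay n r R) : MBoundary M R :=
  Quot.mk _ ξ

/-- The metric `ρ_a` on the hyperbolic boundary: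
`ρ_a(ξ̄,η̄) = exp(-a · inf{t(ξ,η) : ξ ∈ ξ̄, η ∈ η̄})` for distinct classes, and `0` otherwise. -/
def mrho (M : MoranStructure d J n r) (R a : ℝ) (p q : MBoundary M R) : ℝ :=
  if p = q then 0
  else Real.exp (-a * (sInf {s : EReal | ∃ ξ η : MRay n r R,
    mkB M R ξ = p ∧ mkB M R η = q ∧ s = tLim (AugGraph M R) [] ξ.1 η.1}).toReal)

/-- An abstract augmented tree in the sense of Kaimanovich: a rooted tree (encoded
by a parent map and a level function) together with a symmetric horizontal edge
relation `Eh` joining distinct vertices of a common level whose parents are equal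
or horizontally joined. -/
structure AugmentedTree (V : Type*) where
  root : V
  parent : V → V
  lvl : V → ℕ
  lvl_root : lvl root = 0
  lvl_parent : ∀ x, x ≠ root → lvl (parent x) + 1 = lvl x
  Eh : V → V → Prop
  Eh_symm : ∀ x y, Eh x y → Eh y x
  Eh_ne : ∀ x y, Eh x y → x ≠ y
  Eh_lvl : ∀ x y, Eh x y → lvl x = lvl y
  Eh_parent : ∀ x y, Eh x y → parent x = parent y ∨ Eh (parent x) (parent y)

namespace AugmentedTree

variable {V : Type*} (T : AugmentedTree V)

/-- The vertical (tree) edge relation. -/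
def Ev (x y : V) : Prop :=
  (x ≠ T.root ∧ T.parent x = y) ∨ (y ≠ T.root ∧ T.parent y = x)

/-- The graph `(X, 𝔈)`, `𝔈 = 𝔈_v ∪ 𝔈_h`. -/
def graph : SimpleGraph V where
  Adj x y := x ≠ y ∧ (T.Ev x y ∨ T.Eh x y)
  symm := by
    constructor
    rintro x y ⟨hne, h | h⟩
    · exact ⟨hne.symm, Or.inl h.symm⟩
    · exact ⟨hne.symm, Or.inr (T.Eh_symm x y h)⟩
  loopless := ⟨fun _ h => h.1 rfl⟩

/-- Gromov product `⟨x,y⟩ = (|x| + |y| - d(x,y))/2` (one has `d(o,x) = |x| = lvl x`). -/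
def gromov (x y : V) : ℝ :=
  ((T.lvl x : ℝ) + (T.lvl y : ℝ) - (T.graph.dist x y : ℝ)) / 2

/-- Gromov hyperbolicity. -/
def Hyperbolic : Prop :=
  ∃ δ : ℝ, 0 ≤ δ ∧ ∀ x y z : V,
    min (T.gromov x z) (T.gromov z y) - δ ≤ T.gromov x y

/-- A geodesic ray from the root: `x_0 = o` and `x_m = (x_{m+1})⁻¹`. -/
def IsRayT (x : ℕ → V) : Prop := x 0 = T.root ∧ ∀ m, T.parent (x (m + 1)) = x m

/-- Geodesic rays from the root, as a type. -/
def Ray := {x : ℕ → V // T.IsRayT x}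

/-- `t(ξ,η) = liminf_m ⟨x_m, y_m⟩`, valued in `EReal`. -/
def tvalT (ξ η : T.Ray) : EReal :=
  Filter.liminf (fun m => ((T.gromov (ξ.1 m) (η.1 m) : ℝ) : EReal)) Filter.atTop

/-- The hyperbolic boundary: classes of geodesic rays, two rays being equivalent
when `t(ξ,η) = ∞`. -/
def Boundary := Quot (fun ξ η : T.Ray => T.tvalT ξ η = ⊤)

/-- The class of a ray in the boundary. -/
def mkBd (ξ : T.Ray) : T.Boundary := Quot.mk _ ξ

/-- The metric `ρ_a` on the hyperbolic boundary. -/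
def rho (a : ℝ) (p q : T.Boundary) : ℝ :=
  if p = q then 0
  else Real.exp (-a * (sInf {s : EReal | ∃ ξ η : T.Ray,
    T.mkBd ξ = p ∧ T.mkBd η = q ∧ s = T.tvalT ξ η}).toReal)

end AugmentedTree

end MoranPaper

end
namespace MoranPaper

noncomputable section Aux2

open Metric Set SimpleGraph

variable {d : ℕ} {J : Set (Pt d)} {n : ℕ → ℕ} {r : ℕ → ℝ} {R : ℝ}

lemma isometry_fix0_surj {d : ℕ} (hd : 1 ≤ d) (h : Pt d → Pt d)
    (h0 : h 0 = 0) (hiso : Isometry h) : Function.Surjective h := by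
  have hnorm : ∀ x, ‖h x‖ = ‖x‖ := by
    intro x
    have := hiso.dist_eq x 0
    simpa [h0, dist_eq_norm] using this
  have hinner : ∀ x y, (inner ℝ (h x) (h y) : ℝ) = inner ℝ x y := by
    intro x y
    have hdist : ‖h x - h y‖ = ‖x - y‖ := by
      have := hiso.dist_eq x y; simpa [dist_eq_norm] using this
    have e1 := @norm_sub_sq_real (Pt d) _ _ (h x) (h y)
    have e2 := @norm_sub_sq_real (Pt d) _ _ x y
    rw [hdist, e2, hnorm, hnorm] at e1
    linarith
  set B := stdOrthonormalBasis ℝ (Pt d) with hB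
  have hfin : 0 < Module.finrank ℝ (Pt d) := by
    rw [finrank_euclideanSpace_fin]; omega
  haveI : Nonempty (Fin (Module.finrank ℝ (Pt d))) := ⟨⟨0, hfin⟩⟩
  have honf : Orthonormal ℝ (fun i => h (B i)) := by
    rw [orthonormal_iff_ite]
    intro i j
    rw [hinner]
    have := B.orthonormal
    rw [orthonormal_iff_ite] at this
    exact this i j
  have hcard : Fintype.card (Fin (Module.finrank ℝ (Pt d))) = Module.finrank ℝ (Pt d) := by simp
  have hspan : ⊤ ≤ Submodule.span ℝ (Set.range fun i => h (B i)) := by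
    rw [← coe_basisOfOrthonormalOfCardEqFinrank honf hcard]
    exact (basisOfOrthonormalOfCardEqFinrank honf hcard).span_eq.ge
  set F : OrthonormalBasis _ ℝ (Pt d) := OrthonormalBasis.mk honf hspan with hF
  have hFcoe : ∀ i, F i = h (B i) := fun i => by rw [hF, OrthonormalBasis.coe_mk]
  intro y
  set x : Pt d := ∑ i, (inner ℝ (F i) y : ℝ) • B i with hx
  refine ⟨x, ?_⟩
  have hBon := B.orthonormal
  rw [orthonormal_iff_ite] at hBon
  have key : ∀ j, (inner ℝ (F j) (h x) : ℝ) = inner ℝ (F j) y := by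
    intro j
    calc (inner ℝ (F j) (h x) : ℝ) = inner ℝ (h (B j)) (h x) := by rw [hFcoe]
      _ = inner ℝ (B j) x := hinner _ _
      _ = ∑ i, (inner ℝ (F i) y : ℝ) * (inner ℝ (B j) (B i) : ℝ) := by
          rw [hx, inner_sum]; simp only [real_inner_smul_right]
      _ = ∑ i, (inner ℝ (F i) y : ℝ) * (if j = i then (1:ℝ) else 0) := by
          refine Finset.sum_congr rfl fun i _ => by rw [hBon]
      _ = inner ℝ (F j) y := by simp
  calc h x = ∑ j, (inner ℝ (F j) (h x) : ℝ) • F j := (F.sum_repr' _).symm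
    _ = ∑ j, (inner ℝ (F j) y : ℝ) • F j := Finset.sum_congr rfl fun j _ => by rw [key]
    _ = y := F.sum_repr' y

lemma MoranData.R_le_r (hD : MoranData d J n r R) (k : ℕ) : R ≤ r k := by
  rw [hD.R_inf]
  exact ciInf_le ⟨0, by rintro x ⟨j, rfl⟩; exact (hD.r_pos j).le⟩ k

lemma MoranData.R_lt_one (hD : MoranData d J n r R) : R < 1 :=
  lt_of_le_of_lt (hD.R_le_r 0) (hD.r_lt_one 0)

lemma prodR_succ' (r : ℕ → ℝ) (k : ℕ) : prodR r (k + 1) = prodR r k * r k :=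
  Finset.prod_range_succ _ _

lemma prodR_pos (hD : MoranData d J n r R) (k : ℕ) : 0 < prodR r k :=
  Finset.prod_pos fun j _ => hD.r_pos j

lemma prodR_anti (hD : MoranData d J n r R) {k l : ℕ} (h : k ≤ l) : prodR r l ≤ prodR r k := by
  have hstep : ∀ j, prodR r (j + 1) ≤ prodR r j := by
    intro j
    rw [prodR_succ']
    nlinarith [prodR_pos hD j, hD.r_pos j, hD.r_lt_one j]
  exact antitone_nat_of_succ_le hstep h

lemma pow_le_prodR (hD : MoranData d J n r R) (k : ℕ) : R ^ k ≤ prodR r k := by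
  induction k with
  | zero => simp [prodR]
  | succ k ih =>
    rw [pow_succ, prodR_succ']
    exact mul_le_mul ih (hD.R_le_r k) hD.R_pos.le (prodR_pos hD k).le

lemma mem_XLevel_iff {m : ℕ} (hm : m ≠ 0) {w : List ℕ} :
    w ∈ XLevel n r R m ↔ IsWord n w ∧ prodR r w.length ≤ R ^ m ∧ R ^ m < prodR r (w.length - 1) := by
  unfold XLevel
  rw [if_neg hm]
  rfl

lemma mem_XLevel_zero {w : List ℕ} : w ∈ XLevel n r R 0 ↔ w = [] := by
  simp [XLevel]

lemma length_pos_of_mem_XLevel (hD : MoranData d J n r R) {m : ℕ} {w : List ℕ}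
    (hm : 1 ≤ m) (hw : w ∈ XLevel n r R m) : 1 ≤ w.length := by
  rw [mem_XLevel_iff (by omega)] at hw
  by_contra hcon
  have hw0 : w.length = 0 := by omega
  have h1 : (1:ℝ) ≤ R ^ m := by
    have := hw.2.1
    rwa [hw0, show prodR r 0 = 1 by simp [prodR]] at this
  have h2 : R ^ m < 1 := pow_lt_one₀ hD.R_pos.le hD.R_lt_one (by omega)
  linarith

lemma XLevel_unique (hD : MoranData d J n r R) {m m' : ℕ} {w : List ℕ}
    (hm : 1 ≤ m) (hm' : 1 ≤ m')
    (h1 : w ∈ XLevel n r R m) (h2 : w ∈ XLevel n r R m') : m = m' := by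
  have hlen := length_pos_of_mem_XLevel hD hm h1
  obtain ⟨k, hk⟩ : ∃ k, w.length = k + 1 := ⟨w.length - 1, by omega⟩
  rw [mem_XLevel_iff (by omega), hk] at h1 h2
  simp only [Nat.add_sub_cancel] at h1 h2
  have key : ∀ a b : ℕ, prodR r (k+1) ≤ R ^ a → R ^ b < prodR r k → a ≤ b := by
    intro a b hpa hpb
    have h3 : R ^ (b + 1) < R ^ a := by
      calc R ^ (b+1) = R * R ^ b := by rw [pow_succ]; ring
        _ < R * prodR r k := by nlinarith [hD.R_pos]
        _ ≤ prodR r k * r k := by nlinarith [prodR_pos hD k, hD.R_le_r k]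
        _ = prodR r (k+1) := (prodR_succ' r k).symm
        _ ≤ R ^ a := hpa
    have := (pow_lt_pow_iff_right_of_lt_one₀ hD.R_pos hD.R_lt_one).mp h3
    omega
  have e1 := key m m' h1.2.1 h2.2.2
  have e2 := key m' m h2.2.1 h1.2.2
  omega

lemma IsWord.prefix {u w : List ℕ} (hw : IsWord n w) (h : u <+: w) : IsWord n u := by
  intro j hj
  have h2 := hw j (lt_of_lt_of_le hj h.length_le)
  have hg : u.get ⟨j, hj⟩ = w.get ⟨j, lt_of_lt_of_le hj h.length_le⟩ := by
    simp only [List.get_eq_getElem]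
    exact h.getElem hj
  rw [hg]
  exact h2

lemma isword_concat {w : List ℕ} {a : ℕ} (h : IsWord n (w ++ [a])) :
    IsWord n w ∧ 1 ≤ a ∧ a ≤ n w.length := by
  have hlt : w.length < (w ++ [a]).length := by simp
  have h2 := h w.length hlt
  have hget : (w ++ [a]).get ⟨w.length, hlt⟩ = a := by
    simp only [List.get_eq_getElem]
    exact List.getElem_concat_length rfl _
  rw [hget] at h2
  exact ⟨h.prefix (List.prefix_append w [a]), h2.1, h2.2⟩

variable (M : MoranStructure d J n r)

lemma Jset_prefix : ∀ {w u : List ℕ}, IsWord n w → u <+: w → M.Jset w ⊆ M.Jset u := by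
  intro w
  induction w using List.reverseRecOn with
  | nil =>
    intro u _ h
    rw [List.prefix_nil.mp h]
  | append_singleton ws a ih =>
    intro u hw hu
    rcases eq_or_ne u (ws ++ [a]) with rfl | hne
    · exact subset_rfl
    · obtain ⟨hws, h1, h2⟩ := isword_concat hw
      have hlen : u.length ≤ ws.length := by
        have hle := hu.length_le
        simp only [List.length_append, List.length_singleton] at hle
        rcases eq_or_lt_of_le hle with heq | hlt
        · exact absurd (hu.eq_of_length (by simpa using heq)) hne
        · omega
      have hu' : u <+: ws := List.prefix_of_prefix_length_le hu (List.prefix_append ws [a]) hlen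
      exact (M.nested ws hws a h1 h2).trans (ih hws hu')

lemma diam_Jset (hD : MoranData d J n r R) :
    ∀ {w : List ℕ}, IsWord n w → Metric.diam (M.Jset w) = prodR r w.length * Metric.diam J := by
  intro w
  induction w using List.reverseRecOn with
  | nil => intro _; simp [M.root_eq, prodR]
  | append_singleton ws a ih =>
    intro hw
    obtain ⟨hws, h1, h2⟩ := isword_concat hw
    rw [M.diam_ratio ws hws a h1 h2, ih hws]
    simp only [List.length_append, List.length_singleton]
    rw [prodR_succ']
    ring

lemma Jset_compact (hD : MoranData d J n r R) {w : List ℕ} (hw : IsWord n w) :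
    IsCompact (M.Jset w) := by
  obtain ⟨S, c, hc, hdist, himg⟩ := M.similar w hw
  rw [himg]
  have hlip : LipschitzWith c.toNNReal S := by
    apply LipschitzWith.of_dist_le_mul
    intro x y
    rw [hdist, Real.coe_toNNReal _ hc.le]
  exact hD.compact.image hlip.continuous

lemma Jset_nonempty (hD : MoranData d J n r R) {w : List ℕ} (hw : IsWord n w) :
    (M.Jset w).Nonempty := by
  obtain ⟨S, c, hc, hdist, himg⟩ := M.similar w hw
  rw [himg]
  exact (hD.int_nonempty.mono interior_subset).image S

lemma diam_J_pos (hD : MoranData d J n r R) : 0 < Metric.diam J := by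
  obtain ⟨z, hz⟩ := hD.int_nonempty
  rw [mem_interior_iff_mem_nhds, Metric.mem_nhds_iff] at hz
  obtain ⟨ρ, hρ, hball⟩ := hz
  set z' : Pt d := z + EuclideanSpace.single ⟨0, hD.dim_pos⟩ ((ρ:ℝ)/2) with hz'
  have hdzz : dist z' z = ρ/2 := by
    rw [hz', dist_self_add_left, EuclideanSpace.norm_single, Real.norm_eq_abs,
      abs_of_pos (by positivity)]
  have hz'mem : z' ∈ J := hball (by rw [Metric.mem_ball, hdzz]; linarith)
  have hzmem : z ∈ J := hball (mem_ball_self hρ)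
  have := Metric.dist_le_diam_of_mem hD.compact.isBounded hz'mem hzmem
  rw [hdzz] at this
  linarith

lemma Jset_inner_ball (hD : MoranData d J n r R) {z : Pt d} {ρ : ℝ} (hρ : 0 < ρ)
    (hball : Metric.ball z ρ ⊆ J) {w : List ℕ} (hw : IsWord n w) :
    ∃ cpt, cpt ∈ M.Jset w ∧ Metric.ball cpt (ρ * prodR r w.length) ⊆ interior (M.Jset w) := by
  obtain ⟨S, c, hc, hdist, himg⟩ := M.similar w hw
  have hbd : Bornology.IsBounded (S '' J) := by
    have hlip : LipschitzWith c.toNNReal S := by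
      apply LipschitzWith.of_dist_le_mul
      intro x y
      rw [hdist, Real.coe_toNNReal _ hc.le]
    exact (hD.compact.image hlip.continuous).isBounded
  have hdiam_img : Metric.diam (M.Jset w) = c * Metric.diam J := by
    rw [himg]
    apply le_antisymm
    · apply Metric.diam_le_of_forall_dist_le (by positivity)
      rintro _ ⟨x, hx, rfl⟩ _ ⟨y, hy, rfl⟩
      rw [hdist]
      exact mul_le_mul_of_nonneg_left
        (Metric.dist_le_diam_of_mem hD.compact.isBounded hx hy) hc.le
    · have h2 : Metric.diam J ≤ Metric.diam (S '' J) / c := by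
        apply Metric.diam_le_of_forall_dist_le (by positivity)
        intro x hx y hy
        rw [le_div_iff₀ hc]
        calc dist x y * c = c * dist x y := mul_comm _ _
          _ = dist (S x) (S y) := (hdist x y).symm
          _ ≤ Metric.diam (S '' J) :=
              Metric.dist_le_diam_of_mem hbd ⟨x, hx, rfl⟩ ⟨y, hy, rfl⟩
      calc c * Metric.diam J ≤ c * (Metric.diam (S '' J) / c) :=
            mul_le_mul_of_nonneg_left h2 hc.le
        _ = Metric.diam (S '' J) := by field_simp
  have hceq : c = prodR r w.length := by
    have h1 := diam_Jset M hD hw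
    rw [hdiam_img] at h1
    have hD0 := diam_J_pos hD
    exact mul_right_cancel₀ hD0.ne' h1
  have hsurj : Function.Surjective S := by
    set g : Pt d → Pt d := fun x => c⁻¹ • S x with hg
    have hgiso : ∀ x y, dist (g x) (g y) = dist x y := by
      intro x y
      rw [hg]
      simp only
      rw [dist_smul₀, hdist, norm_inv, Real.norm_eq_abs, abs_of_pos hc]
      field_simp
    set h : Pt d → Pt d := fun x => g x - g 0 with hh
    have hhiso : Isometry h := by
      apply Isometry.of_dist_eq
      intro x y
      rw [hh]
      simp only
      rw [dist_sub_right]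
      exact hgiso x y
    have hsurj_h := isometry_fix0_surj hD.dim_pos h (by rw [hh]; simp) hhiso
    intro y
    obtain ⟨x, hx⟩ := hsurj_h (c⁻¹ • y - g 0)
    refine ⟨x, ?_⟩
    have hgx : g x = c⁻¹ • y := by
      rw [hh] at hx
      simp only at hx
      have := congrArg (· + g 0) hx
      simpa [sub_add_cancel] using this
    have hS : S x = c • (c⁻¹ • y) := by
      rw [← hgx, hg]
      simp [smul_smul, mul_inv_cancel₀ hc.ne']
    rw [hS, smul_smul, mul_inv_cancel₀ hc.ne', one_smul]
  have himgball : S '' (Metric.ball z ρ) = Metric.ball (S z) (c * ρ) := by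
    ext p
    constructor
    · rintro ⟨x, hx, rfl⟩
      rw [Metric.mem_ball] at hx ⊢
      rw [hdist]
      exact (mul_lt_mul_iff_right₀ hc).mpr hx
    · intro hp
      obtain ⟨x, rfl⟩ := hsurj p
      rw [Metric.mem_ball, hdist] at hp
      exact ⟨x, by rw [Metric.mem_ball]; exact (mul_lt_mul_iff_right₀ hc).mp hp, rfl⟩
  refine ⟨S z, by rw [himg]; exact ⟨z, hball (mem_ball_self hρ), rfl⟩, ?_⟩
  rw [show ρ * prodR r w.length = c * ρ by rw [hceq]; ring, ← himgball]
  apply interior_maximal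
  · rw [himg]
    exact Set.image_mono hball
  · rw [himgball]
    exact Metric.isOpen_ball

lemma prefix_eq_of_XLevel (hD : MoranData d J n r R) {s : ℕ} (hs : 1 ≤ s) {a b : List ℕ}
    (hab : a <+: b) (ha : a ∈ XLevel n r R s) (hb : b ∈ XLevel n r R s) : a = b := by
  by_contra hne
  have hlen : a.length < b.length :=
    lt_of_le_of_ne hab.length_le (fun h => hne (hab.eq_of_length h))
  rw [mem_XLevel_iff (by omega)] at ha hb
  have h1 : prodR r (b.length - 1) ≤ prodR r a.length := prodR_anti hD (by omega)
  linarith [ha.2.1, hb.2.2]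

lemma prefix_unique (hD : MoranData d J n r R) {s : ℕ} {w a b : List ℕ}
    (ha1 : a <+: w) (hb1 : b <+: w)
    (ha : a ∈ XLevel n r R s) (hb : b ∈ XLevel n r R s) : a = b := by
  rcases Nat.eq_zero_or_pos s with rfl | hs
  · rw [mem_XLevel_zero] at ha hb
    rw [ha, hb]
  · rcases List.prefix_or_prefix_of_prefix ha1 hb1 with h | h
    · exact prefix_eq_of_XLevel hD hs h ha hb
    · exact (prefix_eq_of_XLevel hD hs h hb ha).symm

lemma exists_first_diff : ∀ (a b : List ℕ), ¬ a <+: b → ¬ b <+: a →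
    ∃ (u : List ℕ) (α β : ℕ) (ta tb : List ℕ),
      a = u ++ α :: ta ∧ b = u ++ β :: tb ∧ α ≠ β := by
  intro a
  induction a with
  | nil => intro b h _; exact absurd (List.nil_prefix) h
  | cons x a' ih =>
    intro b h1 h2
    cases b with
    | nil => exact absurd List.nil_prefix h2
    | cons y b' =>
      rcases eq_or_ne x y with rfl | hxy
      · have h1' : ¬ a' <+: b' := fun hc => h1 (List.cons_prefix_cons.mpr ⟨rfl, hc⟩)
        have h2' : ¬ b' <+: a' := fun hc => h2 (List.cons_prefix_cons.mpr ⟨rfl, hc⟩)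
        obtain ⟨u, α, β, ta, tb, e1, e2, hne⟩ := ih b' h1' h2'
        exact ⟨x :: u, α, β, ta, tb, by simp [e1], by simp [e2], hne⟩
      · exact ⟨[], x, y, a', b', rfl, rfl, hxy⟩

lemma interior_disjoint (hD : MoranData d J n r R) {s : ℕ} (hs : 1 ≤ s) {a b : List ℕ}
    (hne : a ≠ b) (ha : a ∈ XLevel n r R s) (hb : b ∈ XLevel n r R s) :
    interior (M.Jset a) ∩ interior (M.Jset b) = ∅ := by
  have hwa : IsWord n a := ((mem_XLevel_iff (by omega)).mp ha).1
  have hwb : IsWord n b := ((mem_XLevel_iff (by omega)).mp hb).1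
  have h1 : ¬ a <+: b := fun h => hne (prefix_eq_of_XLevel hD hs h ha hb)
  have h2 : ¬ b <+: a := fun h => hne ((prefix_eq_of_XLevel hD hs h hb ha).symm)
  obtain ⟨u, α, β, ta, tb, e1, e2, hαβ⟩ := exists_first_diff a b h1 h2
  subst e1; subst e2
  have hpa : u ++ [α] <+: u ++ α :: ta := ⟨ta, by simp⟩
  have hpb : u ++ [β] <+: u ++ β :: tb := ⟨tb, by simp⟩
  obtain ⟨hu, hα1, hα2⟩ := isword_concat (hwa.prefix hpa)
  obtain ⟨-, hβ1, hβ2⟩ := isword_concat (hwb.prefix hpb)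
  have hdisj := M.disjoint_int u hu α β hα1 hα2 hβ1 hβ2 hαβ
  apply Set.eq_empty_of_subset_empty
  rw [← hdisj]
  exact Set.inter_subset_inter (interior_mono (Jset_prefix M hwa hpa))
    (interior_mono (Jset_prefix M hwb hpb))

lemma ancestor_exists (hD : MoranData d J n r R) {m s : ℕ} (hsm : s ≤ m) {w : List ℕ}
    (hw : w ∈ XLevel n r R m) : ∃ a, a <+: w ∧ a ∈ XLevel n r R s := by
  rcases Nat.eq_zero_or_pos s with rfl | hs
  · exact ⟨[], List.nil_prefix, by rw [mem_XLevel_zero]⟩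
  · have hm : 1 ≤ m := le_trans hs hsm
    have hword : IsWord n w := ((mem_XLevel_iff (by omega)).mp hw).1
    have hple : prodR r w.length ≤ R ^ s :=
      le_trans ((mem_XLevel_iff (by omega)).mp hw).2.1
        (pow_le_pow_of_le_one hD.R_pos.le hD.R_lt_one.le hsm)
    have hex : ∃ k, prodR r k ≤ R ^ s := ⟨w.length, hple⟩
    have hkle : Nat.find hex ≤ w.length := Nat.find_le hple
    have hkspec : prodR r (Nat.find hex) ≤ R ^ s := Nat.find_spec hex
    have hk1 : 1 ≤ Nat.find hex := by
      rcases Nat.eq_zero_or_pos (Nat.find hex) with h0 | h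
      · exfalso
        have h1 := hkspec
        rw [h0, show prodR r 0 = 1 by simp [prodR]] at h1
        have h2 : R ^ s < 1 := pow_lt_one₀ hD.R_pos.le hD.R_lt_one (by omega)
        linarith
      · exact h
    have hkmin : ¬ prodR r (Nat.find hex - 1) ≤ R ^ s := Nat.find_min hex (by omega)
    refine ⟨w.take (Nat.find hex), List.take_prefix _ w, ?_⟩
    rw [mem_XLevel_iff (by omega)]
    have hlen : (w.take (Nat.find hex)).length = Nat.find hex := by
      simp [min_eq_left hkle]
    refine ⟨hword.prefix (List.take_prefix _ w), ?_, ?_⟩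
    · rw [hlen]; exact hkspec
    · rw [hlen]; exact lt_of_not_ge hkmin

lemma parent_step (hD : MoranData d J n r R) {t : ℕ} {a : List ℕ}
    (ha : a ∈ XLevel n r R (t + 1)) :
    ∃ b, b <+: a ∧ b ∈ XLevel n r R t ∧ IsParent n r R b a := by
  obtain ⟨b, hba, hbt⟩ := ancestor_exists hD (Nat.le_succ t) ha
  have hne : b ≠ a := by
    intro h
    subst h
    rcases Nat.eq_zero_or_pos t with rfl | ht
    · rw [mem_XLevel_zero] at hbt
      have := length_pos_of_mem_XLevel hD le_rfl ha
      rw [hbt] at this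
      simp at this
    · have := XLevel_unique hD ht (by omega) hbt ha
      omega
  exact ⟨b, hba, hbt, hne, hba, t + 1, by omega, ha, by simpa using hbt⟩

lemma descend (hD : MoranData d J n r R) :
    ∀ (l : ℕ) {m : ℕ} {w : List ℕ}, w ∈ XLevel n r R m → l ≤ m →
    ∃ a, a <+: w ∧ a ∈ XLevel n r R (m - l) ∧
      ∃ q : (AugGraph M R).Walk w a, q.length = l := by
  intro l
  induction l with
  | zero =>
    intro m w hw _
    exact ⟨w, List.prefix_refl w, by simpa using hw, SimpleGraph.Walk.nil, rfl⟩
  | succ l ih =>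
    intro m w hw hl
    obtain ⟨a, haw, ham, q, hq⟩ := ih hw (by omega)
    have hml : m - l = (m - l - 1) + 1 := by omega
    rw [hml] at ham
    obtain ⟨b, hba, hbt, hpar⟩ := parent_step hD ham
    have hadj : (AugGraph M R).Adj a b := by
      exact Or.inl (Or.inr hpar)
    refine ⟨b, hba.trans haw, ?_, q.concat hadj, by rw [SimpleGraph.Walk.length_concat, hq]⟩
    rw [show m - (l + 1) = m - l - 1 by omega]
    exact hbt

lemma walk_level (hD : MoranData d J n r R) :
    ∀ {x y : List ℕ} (p : (AugGraph M R).Walk x y), p.length ≠ 0 →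
    (∀ e ∈ p.darts, Ehor M R e.toProd.1 e.toProd.2) →
    ∃ m, 1 ≤ m ∧ ∀ v ∈ p.support, v ∈ XLevel n r R m := by
  intro x y p
  induction p with
  | nil => intro h; simp at h
  | @cons u v w h q ih =>
    intro _ hds
    obtain ⟨hne, m0, hm0, huX, hvX, hJ⟩ :=
      hds ⟨(u, v), h⟩ (by rw [SimpleGraph.Walk.darts_cons]; exact List.mem_cons_self)
    refine ⟨m0, hm0, ?_⟩
    intro z hz
    rw [SimpleGraph.Walk.support_cons, List.mem_cons] at hz
    rcases hz with rfl | hz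
    · exact huX
    · by_cases hq : q.length = 0
      · have hsup : q.support = [v] := by
          cases q with
          | nil => simp
          | cons h' q' => simp [SimpleGraph.Walk.length_cons] at hq
        rw [hsup, List.mem_singleton] at hz
        subst hz
        exact hvX
      · obtain ⟨m1, hm1, hsupp1⟩ := ih hq
          (fun e he => hds e (by rw [SimpleGraph.Walk.darts_cons]; exact List.mem_cons_of_mem _ he))
        have heq : m1 = m0 := XLevel_unique hD hm1 hm0 (hsupp1 v q.start_mem_support) hvX
        exact heq ▸ hsupp1 z hz

lemma chain (hD : MoranData d J n r R) :
    ∀ {x y : List ℕ} (p : (AugGraph M R).Walk x y) (Dm : ℝ),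
    (∀ v ∈ p.support, Bornology.IsBounded (M.Jset v) ∧ Metric.diam (M.Jset v) ≤ Dm) →
    (∀ e ∈ p.darts, (M.Jset e.toProd.1 ∩ M.Jset e.toProd.2).Nonempty) →
    ∀ q0 ∈ M.Jset x, ∀ v ∈ p.support, ∀ pt ∈ M.Jset v,
      dist pt q0 ≤ ((p.length : ℝ) + 1) * Dm := by
  intro x y p
  induction p with
  | nil =>
    intro Dm hbd hds q0 hq0 v hv pt hpt
    rw [SimpleGraph.Walk.support_nil, List.mem_singleton] at hv
    subst hv
    obtain ⟨hb, hd⟩ := hbd v (by simp)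
    have := Metric.dist_le_diam_of_mem hb hpt hq0
    simp only [SimpleGraph.Walk.length_nil]
    push_cast
    linarith
  | @cons u v w h q ih =>
    intro Dm hbd hds q0 hq0 v' hv' pt hpt
    obtain ⟨y0, hy0x, hy0w⟩ :=
      hds ⟨(u, v), h⟩ (by rw [SimpleGraph.Walk.darts_cons]; exact List.mem_cons_self)
    obtain ⟨hbu, hdu⟩ := hbd u (by simp)
    have hDm0 : 0 ≤ Dm := le_trans Metric.diam_nonneg hdu
    rw [SimpleGraph.Walk.support_cons, List.mem_cons] at hv'
    rcases hv' with rfl | hv'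
    · have h1 : dist pt q0 ≤ Dm := le_trans (Metric.dist_le_diam_of_mem hbu hpt hq0) hdu
      have h2 : (0:ℝ) ≤ (q.length : ℝ) := by positivity
      rw [SimpleGraph.Walk.length_cons]
      push_cast
      nlinarith
    · have hih := ih Dm
        (fun z hz => hbd z (by rw [SimpleGraph.Walk.support_cons]; exact List.mem_cons_of_mem _ hz))
        (fun e he => hds e (by rw [SimpleGraph.Walk.darts_cons]; exact List.mem_cons_of_mem _ he))
        y0 hy0w v' hv' pt hpt
      have h2 : dist y0 q0 ≤ Dm := le_trans (Metric.dist_le_diam_of_mem hbu hy0x hq0) hdu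
      calc dist pt q0 ≤ dist pt y0 + dist y0 q0 := dist_triangle _ _ _
        _ ≤ ((q.length : ℝ) + 1) * Dm + Dm := add_le_add hih h2
        _ = (((SimpleGraph.Walk.cons h q).length : ℝ) + 1) * Dm := by
            rw [SimpleGraph.Walk.length_cons]; push_cast; ring

lemma middle (hD : MoranData d J n r R) :
    ∀ {x y : List ℕ} (p : (AugGraph M R).Walk x y) (m s : ℕ), 1 ≤ m → s ≤ m →
    (∀ v ∈ p.support, v ∈ XLevel n r R m) →
    (∀ e ∈ p.darts, (M.Jset e.toProd.1 ∩ M.Jset e.toProd.2).Nonempty) →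
    ∀ (ax ay : List ℕ), ax <+: x → ax ∈ XLevel n r R s → ay <+: y → ay ∈ XLevel n r R s →
    ∃ W : (AugGraph M R).Walk ax ay,
      ∀ v ∈ W.support, ∃ u ∈ p.support, v <+: u ∧ v ∈ XLevel n r R s := by
  intro x y p
  induction p with
  | nil =>
    intro m s hm hsm hsupp hds ax ay hax1 hax2 hay1 hay2
    have heq : ax = ay := prefix_unique hD hax1 hay1 hax2 hay2
    subst heq
    refine ⟨SimpleGraph.Walk.nil, ?_⟩
    intro z hz
    rw [SimpleGraph.Walk.support_nil, List.mem_singleton] at hz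
    subst hz
    refine ⟨_, ?_, hax1, hax2⟩
    simp
  | @cons u v w h q ih =>
    intro m s hm hsm hsupp hds ax ay hax1 hax2 hay1 hay2
    have hvX : v ∈ XLevel n r R m := hsupp v (by simp)
    obtain ⟨av, hav1, hav2⟩ := ancestor_exists hD hsm hvX
    obtain ⟨W', hW'⟩ := ih m s hm hsm
      (fun z hz => hsupp z (by rw [SimpleGraph.Walk.support_cons]; exact List.mem_cons_of_mem _ hz))
      (fun e he => hds e (by rw [SimpleGraph.Walk.darts_cons]; exact List.mem_cons_of_mem _ he))
      av ay hav1 hav2 hay1 hay2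
    have hsupW : ∀ z ∈ W'.support, ∃ u' ∈ (SimpleGraph.Walk.cons h q).support,
        z <+: u' ∧ z ∈ XLevel n r R s := by
      intro z hz
      obtain ⟨u', hu', h1, h2⟩ := hW' z hz
      exact ⟨u', by rw [SimpleGraph.Walk.support_cons]; exact List.mem_cons_of_mem _ hu', h1, h2⟩
    rcases eq_or_ne ax av with rfl | hne
    · exact ⟨W', hsupW⟩
    · have hs1 : 1 ≤ s := by
        rcases Nat.eq_zero_or_pos s with h0 | hp
        · exfalso
          subst h0
          rw [mem_XLevel_zero] at hax2 hav2
          exact hne (hax2.trans hav2.symm)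
        · exact hp
      obtain ⟨pt0, hpt1, hpt2⟩ :=
        hds ⟨(u, v), h⟩ (by rw [SimpleGraph.Walk.darts_cons]; exact List.mem_cons_self)
      have huX : u ∈ XLevel n r R m := hsupp u (by simp)
      have huw : IsWord n u := ((mem_XLevel_iff (by omega)).mp huX).1
      have hvw : IsWord n v := ((mem_XLevel_iff (by omega)).mp hvX).1
      have hJ : (M.Jset ax ∩ M.Jset av).Nonempty :=
        ⟨pt0, Jset_prefix M huw hax1 hpt1, Jset_prefix M hvw hav1 hpt2⟩
      have hadj : (AugGraph M R).Adj ax av := by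
        exact Or.inr ⟨hne, s, hs1, hax2, hav2, hJ⟩
      refine ⟨SimpleGraph.Walk.cons hadj W', ?_⟩
      intro z hz
      rw [SimpleGraph.Walk.support_cons, List.mem_cons] at hz
      rcases hz with rfl | hz
      · exact ⟨u, by simp, hax1, hax2⟩
      · exact hsupW z hz

lemma count_lemma (F : Finset (List ℕ)) (ctr : List ℕ → Pt d) (ε U : ℝ) (q0 : Pt d)
    (hε : 0 < ε) (hU : 0 < U)
    (hint : ∀ a ∈ F, Metric.ball (ctr a) ε ⊆ interior (M.Jset a))
    (hdisj : ∀ a ∈ F, ∀ b ∈ F, a ≠ b → interior (M.Jset a) ∩ interior (M.Jset b) = ∅)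
    (hsub : ∀ a ∈ F, Metric.ball (ctr a) ε ⊆ Metric.ball q0 U) :
    (F.card : ℝ) * ε ^ d ≤ U ^ d := by
  have hpair : (↑F : Set (List ℕ)).PairwiseDisjoint (fun a => Metric.ball (ctr a) ε) := by
    intro a ha b hb hab
    apply Set.disjoint_left.mpr
    intro pt hpa hpb
    have hmem : pt ∈ interior (M.Jset a) ∩ interior (M.Jset b) :=
      ⟨hint a ha hpa, hint b hb hpb⟩
    rw [hdisj a ha b hb hab] at hmem
    exact hmem
  have hmeas := MeasureTheory.measure_biUnion_finset (μ := MeasureTheory.volume) hpair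
    (fun a _ => measurableSet_ball (x := ctr a) (ε := ε))
  have hle : MeasureTheory.volume (⋃ a ∈ F, Metric.ball (ctr a) ε)
      ≤ MeasureTheory.volume (Metric.ball q0 U) :=
    MeasureTheory.measure_mono (Set.iUnion₂_subset hsub)
  rw [hmeas] at hle
  have hballs : ∀ a : List ℕ, MeasureTheory.volume (Metric.ball (ctr a) ε)
      = ENNReal.ofReal (ε ^ d) * MeasureTheory.volume (Metric.ball (0 : Pt d) 1) := by
    intro a
    rw [MeasureTheory.Measure.addHaar_ball_of_pos _ _ hε, finrank_euclideanSpace_fin]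
  rw [Finset.sum_congr rfl (fun a _ => hballs a), Finset.sum_const, nsmul_eq_mul] at hle
  have hUball : MeasureTheory.volume (Metric.ball q0 U)
      = ENNReal.ofReal (U ^ d) * MeasureTheory.volume (Metric.ball (0 : Pt d) 1) := by
    rw [MeasureTheory.Measure.addHaar_ball_of_pos _ _ hU, finrank_euclideanSpace_fin]
  rw [hUball, ← mul_assoc] at hle
  have hv1 : MeasureTheory.volume (Metric.ball (0 : Pt d) 1) ≠ 0 :=
    (Metric.measure_ball_pos MeasureTheory.volume _ one_pos).ne'
  have hv2 : MeasureTheory.volume (Metric.ball (0 : Pt d) 1) ≠ ⊤ :=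
    MeasureTheory.measure_ball_lt_top.ne
  have hle2 : (F.card : ENNReal) * ENNReal.ofReal (ε ^ d) ≤ ENNReal.ofReal (U ^ d) :=
    (ENNReal.mul_le_mul_iff_left hv1 hv2).mp hle
  rw [show ((F.card : ENNReal)) = ENNReal.ofReal (F.card : ℝ) by simp,
    ← ENNReal.ofReal_mul (by positivity)] at hle2
  exact (ENNReal.ofReal_le_ofReal_iff (by positivity)).mp hle2

lemma prodR_ge_of_mem (hD : MoranData d J n r R) {s : ℕ} (hs : 1 ≤ s) {a : List ℕ}
    (ha : a ∈ XLevel n r R s) : R ^ (s + 1) ≤ prodR r a.length := by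
  have hlen := length_pos_of_mem_XLevel hD hs ha
  rw [mem_XLevel_iff (by omega)] at ha
  obtain ⟨k, hk⟩ : ∃ k, a.length = k + 1 := ⟨a.length - 1, by omega⟩
  rw [hk] at ha ⊢
  have h1 : R ^ s < prodR r k := by simpa using ha.2.2
  rw [prodR_succ', pow_succ]
  exact mul_le_mul h1.le (hD.R_le_r k) hD.R_pos.le (prodR_pos hD k).le

end Aux2
end MoranPaper

set_option maxHeartbeats 2000000 in
/-- the lengths of horizontal geodesics in the induced augmented tree
are uniformly bounded. -/
theorem MoranPaper.statement2 (d : ℕ) (J : Set (MoranPaper.Pt d)) (n : ℕ → ℕ) (r : ℕ → ℝ)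
    (R : ℝ) (hD : MoranPaper.MoranData d J n r R) (M : MoranPaper.MoranStructure d J n r) :
    ∃ k : ℕ, ∀ (x y : List ℕ) (p : (MoranPaper.AugGraph M R).Walk x y),
      (∀ e ∈ p.darts, MoranPaper.Ehor M R e.toProd.1 e.toProd.2) →
      p.length = (MoranPaper.AugGraph M R).dist x y →
      p.length ≤ k := by
  classical
  obtain ⟨z, ρ, hρ, hball⟩ : ∃ z ρ, 0 < ρ ∧ Metric.ball z ρ ⊆ J := by
    obtain ⟨z, hz⟩ := hD.int_nonempty
    rw [mem_interior_iff_mem_nhds, Metric.mem_nhds_iff] at hz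
    obtain ⟨ε, hε, h⟩ := hz
    exact ⟨z, ε, hε, h⟩
  obtain ⟨D0, hD0def⟩ : ∃ t : ℝ, t = Metric.diam J := ⟨_, rfl⟩
  have hD0pos : 0 < D0 := hD0def ▸ diam_J_pos hD
  have hR0 : 0 < R := hD.R_pos
  have hR1 : R < 1 := hD.R_lt_one
  have h1R : 1 < R⁻¹ := by
    rw [← one_div, lt_div_iff₀ hR0]
    linarith
  have hloginv : 0 < Real.log R⁻¹ := Real.log_pos h1R
  obtain ⟨Q, hQdef⟩ : ∃ t : ℝ, t = 1 + D0 / (ρ * R) + D0 / ρ := ⟨_, rfl⟩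
  have hQ1 : 1 ≤ Q := by
    have e1 : 0 ≤ D0 / (ρ * R) := div_nonneg hD0pos.le (by positivity)
    have e2 : 0 ≤ D0 / ρ := div_nonneg hD0pos.le hρ.le
    rw [hQdef]
    linarith
  obtain ⟨A, hAdef⟩ : ∃ t : ℝ, t = 4 / Real.log R⁻¹ := ⟨_, rfl⟩
  have hA0 : 0 ≤ A := by rw [hAdef]; exact (div_pos (by norm_num) hloginv).le
  have hQd1 : (1:ℝ) ≤ Q ^ d := one_le_pow₀ hQ1
  obtain ⟨C, hCdef⟩ : ∃ t : ℝ, t = Q ^ d + 5 := ⟨_, rfl⟩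
  have hC0 : 0 ≤ C := by rw [hCdef]; linarith
  refine ⟨⌈(A + C) ^ 2⌉₊, ?_⟩
  intro x y p hdarts hgeo
  by_cases hL0 : p.length = 0
  · rw [hL0]; exact Nat.zero_le _
  obtain ⟨m, hm1, hsupp⟩ := walk_level M hD p hL0 hdarts
  obtain ⟨L, hLdef⟩ : ∃ t : ℕ, t = p.length := ⟨_, rfl⟩
  rw [← hLdef] at hgeo hL0 ⊢
  have hxX : x ∈ XLevel n r R m := hsupp x p.start_mem_support
  have hyX : y ∈ XLevel n r R m := hsupp y p.end_mem_support
  have hLL : (0:ℝ) ≤ (L:ℝ) := Nat.cast_nonneg L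
  have hlognn : 0 ≤ Real.log ((L:ℝ)+1) := Real.log_nonneg (by linarith)
  obtain ⟨ℓ, hℓdef⟩ : ∃ t : ℕ, t = ⌈Real.log ((L:ℝ)+1) / Real.log R⁻¹⌉₊ + 1 := ⟨_, rfl⟩
  have hℓ1 : 1 ≤ ℓ := by omega
  have hkey : ((L:ℝ) + 1) * R ^ (ℓ - 1) ≤ 1 := by
    have h1 : Real.log ((L:ℝ)+1) ≤ (⌈Real.log ((L:ℝ)+1) / Real.log R⁻¹⌉₊ : ℝ) * Real.log R⁻¹ :=
      (div_le_iff₀ hloginv).mp (Nat.le_ceil _)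
    have hpow : (0:ℝ) < R ^ (ℓ - 1) := pow_pos hR0 _
    have h2 : ((L:ℝ)+1) ≤ (R ^ (ℓ-1))⁻¹ := by
      have hstep : ((L:ℝ)+1) ≤ (R⁻¹) ^ (ℓ - 1) := by
        rw [← Real.exp_log (show (0:ℝ) < (L:ℝ)+1 by linarith),
            ← Real.exp_log (pow_pos (inv_pos.mpr hR0) (ℓ-1))]
        apply Real.exp_le_exp.mpr
        rw [Real.log_pow]
        rw [show ℓ - 1 = ⌈Real.log ((L:ℝ)+1) / Real.log R⁻¹⌉₊ from by omega]
        exact h1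
      rwa [inv_pow] at hstep
    calc ((L:ℝ)+1) * R ^ (ℓ-1) ≤ (R ^ (ℓ-1))⁻¹ * R ^ (ℓ-1) :=
          mul_le_mul_of_nonneg_right h2 hpow.le
      _ = 1 := inv_mul_cancel₀ hpow.ne'
  obtain ⟨l', hl'def⟩ : ∃ t : ℕ, t = min ℓ m := ⟨_, rfl⟩
  have hl'le : l' ≤ m := by rw [hl'def]; exact min_le_right ℓ m
  obtain ⟨ax, haxp, haxs, qx, hqx⟩ := descend M hD l' hxX hl'le
  obtain ⟨ay, hayp, hays, qy, hqy⟩ := descend M hD l' hyX hl'le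
  obtain ⟨W, hW⟩ := middle M hD p m (m - l') hm1 (Nat.sub_le m l') hsupp
    (fun e he => by obtain ⟨-, m', -, -, -, hJ⟩ := hdarts e he; exact hJ)
    ax ay haxp haxs hayp hays
  have hpref_fin : ∀ u : List ℕ, {v : List ℕ | v <+: u}.Finite := by
    intro u
    apply Set.Finite.subset ((Set.finite_Iic u.length).image (fun k => u.take k))
    intro v hv
    exact ⟨v.length, by simpa using hv.length_le, (List.prefix_iff_eq_take.mp hv).symm⟩
  have hSfin : {v : List ℕ | ∃ u ∈ p.support, v <+: u ∧ v ∈ XLevel n r R (m - l')}.Finite := by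
    apply Set.Finite.subset (Set.Finite.biUnion p.support.finite_toSet (fun u _ => hpref_fin u))
    rintro v ⟨u, hu, hpre, -⟩
    exact Set.mem_biUnion hu hpre
  obtain ⟨F, hFdef⟩ : ∃ t : Finset (List ℕ), t = hSfin.toFinset := ⟨_, rfl⟩
  have hFmem : ∀ a ∈ F, ∃ u ∈ p.support, a <+: u ∧ a ∈ XLevel n r R (m - l') := by
    intro a ha
    rwa [hFdef, Set.Finite.mem_toFinset] at ha
  have hBlen : W.bypass.length + 1 ≤ F.card := by
    have hnodup := (SimpleGraph.Walk.bypass_isPath W).support_nodup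
    have hsub : W.bypass.support.toFinset ⊆ F := by
      intro v hv
      rw [hFdef, Set.Finite.mem_toFinset]
      exact hW v (SimpleGraph.Walk.support_bypass_subset W (List.mem_toFinset.mp hv))
    calc W.bypass.length + 1 = W.bypass.support.length := (SimpleGraph.Walk.length_support W.bypass).symm
      _ = W.bypass.support.toFinset.card := (List.toFinset_card_of_nodup hnodup).symm
      _ ≤ F.card := Finset.card_le_card hsub
  have hcard : (F.card : ℝ) ≤ Q ^ d := by
    rcases Nat.eq_zero_or_pos (m - l') with hs0 | hs1
    · have hsub1 : F ⊆ {[]} := by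
        intro v hv
        obtain ⟨u, -, -, hX⟩ := hFmem v hv
        rw [hs0, mem_XLevel_zero] at hX
        simp [hX]
      have h1 : F.card ≤ 1 := by simpa using Finset.card_le_card hsub1
      calc (F.card : ℝ) ≤ 1 := by exact_mod_cast h1
        _ ≤ Q ^ d := hQd1
    · have hs1' : 1 ≤ m - l' := hs1
      have hlm : l' = ℓ := by
        rcases le_or_gt ℓ m with hh | hh
        · rw [hl'def, min_eq_left hh]
        · exfalso
          have : l' = m := by rw [hl'def, min_eq_right hh.le]
          omega
      have hxword : IsWord n x := ((mem_XLevel_iff (show m ≠ 0 by omega)).mp hxX).1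
      obtain ⟨q0, hq0⟩ := Jset_nonempty M hD hxword
      have hbdd : ∀ v ∈ p.support, Bornology.IsBounded (M.Jset v) ∧
          Metric.diam (M.Jset v) ≤ R ^ m * D0 := by
        intro v hv
        have hvX := hsupp v hv
        have hvw : IsWord n v := ((mem_XLevel_iff (show m ≠ 0 by omega)).mp hvX).1
        refine ⟨(Jset_compact M hD hvw).isBounded, ?_⟩
        rw [diam_Jset M hD hvw, ← hD0def]
        have h2 := ((mem_XLevel_iff (show m ≠ 0 by omega)).mp hvX).2.1
        exact mul_le_mul_of_nonneg_right h2 hD0pos.le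
      have hchain := chain M hD p (R ^ m * D0) hbdd
        (fun e he => by obtain ⟨-, m', -, -, -, hJ⟩ := hdarts e he; exact hJ) q0 hq0
      rw [← hLdef] at hchain
      obtain ⟨ctr, hctr⟩ : ∃ ctr : List ℕ → Pt d, ∀ a ∈ F, ctr a ∈ M.Jset a ∧
          Metric.ball (ctr a) (ρ * prodR r a.length) ⊆ interior (M.Jset a) := by
        refine ⟨fun a =>
          if h : ∃ cpt, cpt ∈ M.Jset a ∧
            Metric.ball cpt (ρ * prodR r a.length) ⊆ interior (M.Jset a)
          then h.choose else 0, ?_⟩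
        intro a ha
        obtain ⟨u, hu, hpre, haX⟩ := hFmem a ha
        have haw : IsWord n a := ((mem_XLevel_iff (show m - l' ≠ 0 by omega)).mp haX).1
        have hex := Jset_inner_ball M hD hρ hball haw
        simp only [dif_pos hex]
        exact hex.choose_spec
      obtain ⟨ε, hεdef⟩ : ∃ t : ℝ, t = ρ * R ^ ((m - l') + 1) := ⟨_, rfl⟩
      have hε0 : 0 < ε := by rw [hεdef]; exact mul_pos hρ (pow_pos hR0 _)
      obtain ⟨U, hUdef⟩ : ∃ t : ℝ, t = ε + (R ^ (m - l') * D0 + ((L:ℝ) + 1) * (R ^ m * D0)) := ⟨_, rfl⟩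
      have hU0 : 0 < U := by
        rw [hUdef]
        have t1 : 0 < R ^ (m - l') * D0 := mul_pos (pow_pos hR0 _) hD0pos
        have t2 : 0 ≤ ((L:ℝ) + 1) * (R ^ m * D0) := by
          have := mul_pos (pow_pos hR0 m) hD0pos
          nlinarith [hLL]
        linarith [hε0]
      have hint : ∀ a ∈ F, Metric.ball (ctr a) ε ⊆ interior (M.Jset a) := by
        intro a ha
        refine Set.Subset.trans (Metric.ball_subset_ball ?_) (hctr a ha).2
        obtain ⟨u, hu, hpre, haX⟩ := hFmem a ha
        have h3 := prodR_ge_of_mem hD hs1' haX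
        rw [hεdef]
        exact mul_le_mul_of_nonneg_left h3 hρ.le
      have hbig : ∀ a ∈ F, Metric.ball (ctr a) ε ⊆ Metric.ball q0 U := by
        intro a ha pt hpt
        obtain ⟨u, hu, hpre, haX⟩ := hFmem a ha
        have huX := hsupp u hu
        have huw : IsWord n u := ((mem_XLevel_iff (show m ≠ 0 by omega)).mp huX).1
        have haw : IsWord n a := ((mem_XLevel_iff (show m - l' ≠ 0 by omega)).mp haX).1
        obtain ⟨ptu, hptu⟩ := Jset_nonempty M hD huw
        have hptua : ptu ∈ M.Jset a := Jset_prefix M huw hpre hptu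
        have h1 : dist (ctr a) ptu ≤ R ^ (m - l') * D0 := by
          have hbd := (Jset_compact M hD haw).isBounded
          have hdle := Metric.dist_le_diam_of_mem hbd (hctr a ha).1 hptua
          rw [diam_Jset M hD haw] at hdle
          have h2 : prodR r a.length ≤ R ^ (m - l') :=
            ((mem_XLevel_iff (show m - l' ≠ 0 by omega)).mp haX).2.1
          have h4 := mul_le_mul_of_nonneg_right h2 hD0pos.le
          rw [← hD0def] at hdle
          linarith
        have h2 : dist ptu q0 ≤ ((L:ℝ)+1) * (R^m * D0) := hchain u hu ptu hptu
        have htr := dist_triangle4 pt (ctr a) ptu q0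
        rw [Metric.mem_ball] at hpt ⊢
        rw [hUdef]
        linarith
      have hdisjF : ∀ a ∈ F, ∀ b ∈ F, a ≠ b →
          interior (M.Jset a) ∩ interior (M.Jset b) = ∅ := by
        intro a ha b hb hne
        obtain ⟨-, -, -, haX⟩ := hFmem a ha
        obtain ⟨-, -, -, hbX⟩ := hFmem b hb
        exact interior_disjoint M hD hs1' hne haX hbX
      have hcount := count_lemma M F ctr ε U q0 hε0 hU0 hint hdisjF hbig
      have hUQ : U ≤ Q * ε := by
        have hkey2 : ((L:ℝ)+1) * R ^ m ≤ R ^ ((m - l') + 1) := by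
          have hmexp : R ^ m = R ^ (ℓ - 1) * R ^ ((m - l') + 1) := by
            rw [← pow_add]
            congr 1
            omega
          calc ((L:ℝ)+1) * R ^ m = (((L:ℝ)+1) * R ^ (ℓ-1)) * R ^ ((m-l')+1) := by
                rw [hmexp]; ring
            _ ≤ 1 * R ^ ((m-l')+1) := mul_le_mul_of_nonneg_right hkey (pow_pos hR0 _).le
            _ = R ^ ((m-l')+1) := one_mul _
        have hQε : Q * ε = ε + D0 * R ^ (m - l') + D0 * R ^ ((m-l')+1) := by
          rw [hQdef, hεdef, pow_succ]
          field_simp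
        rw [hQε, hUdef]
        nlinarith [mul_le_mul_of_nonneg_right hkey2 hD0pos.le]
      have hfinal : (F.card : ℝ) * ε ^ d ≤ Q ^ d * ε ^ d := by
        have h9 : U ^ d ≤ (Q * ε) ^ d := pow_le_pow_left₀ hU0.le hUQ d
        have h10 : (Q * ε) ^ d = Q ^ d * ε ^ d := mul_pow Q ε d
        linarith [hcount]
      have hεd : (0:ℝ) < ε ^ d := pow_pos hε0 d
      exact le_of_mul_le_mul_right hfinal hεd
  -- assemble total walk
  have hdistle : L ≤ l' + (W.bypass.length + l') := by
    have h1 := SimpleGraph.dist_le (qx.append (W.bypass.append qy.reverse))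
    have htotlen : (qx.append (W.bypass.append qy.reverse)).length = l' + (W.bypass.length + l') := by
      simp [SimpleGraph.Walk.length_append, SimpleGraph.Walk.length_reverse, hqx, hqy]
    rw [htotlen] at h1
    calc L = (MoranPaper.AugGraph M R).dist x y := hgeo
      _ ≤ _ := h1
  have hLreal : (L : ℝ) ≤ 2 * (ℓ:ℝ) + Q ^ d := by
    have h2 : (W.bypass.length : ℝ) ≤ Q ^ d - 1 := by
      have h3 : ((W.bypass.length + 1 : ℕ) : ℝ) ≤ (F.card:ℝ) := by exact_mod_cast hBlen
      push_cast at h3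
      linarith
    have h4 : (l' : ℝ) ≤ (ℓ:ℝ) := by
      have := min_le_left ℓ m
      rw [hl'def]
      exact_mod_cast this
    have h5 : (L:ℝ) ≤ ((l' + (W.bypass.length + l') : ℕ):ℝ) := by exact_mod_cast hdistle
    push_cast at h5
    linarith
  -- final arithmetic
  have hℓle : (ℓ:ℝ) ≤ Real.log ((L:ℝ)+1) / Real.log R⁻¹ + 2 := by
    have h0 : 0 ≤ Real.log ((L:ℝ)+1) / Real.log R⁻¹ := div_nonneg hlognn hloginv.le
    have h1 := Nat.ceil_lt_add_one h0
    rw [hℓdef]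
    push_cast
    linarith
  have hsqrt : Real.sqrt ((L:ℝ)+1) ^ 2 = (L:ℝ) + 1 := Real.sq_sqrt (by linarith)
  have ht1 : 1 ≤ Real.sqrt ((L:ℝ)+1) := by
    have h8 := Real.sqrt_le_sqrt (show (1:ℝ) ≤ (L:ℝ)+1 by linarith)
    rwa [Real.sqrt_one] at h8
  have hlog2 : Real.log ((L:ℝ)+1) ≤ 2 * Real.sqrt ((L:ℝ)+1) := by
    have e1 : Real.log ((L:ℝ)+1) = 2 * Real.log (Real.sqrt ((L:ℝ)+1)) := by
      rw [Real.log_sqrt (by linarith)]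
      ring
    have e2 : Real.log (Real.sqrt ((L:ℝ)+1)) ≤ Real.sqrt ((L:ℝ)+1) - 1 :=
      Real.log_le_sub_one_of_pos (by linarith)
    linarith
  have hmain : Real.sqrt ((L:ℝ)+1) ^ 2 ≤ A * Real.sqrt ((L:ℝ)+1) + C := by
    rw [hsqrt, hCdef, hAdef]
    have h6 : (L:ℝ) ≤ 2 * (Real.log ((L:ℝ)+1) / Real.log R⁻¹ + 2) + Q ^ d := by
      have := mul_le_mul_of_nonneg_left hℓle (by norm_num : (0:ℝ) ≤ 2)
      linarith
    have h7 : 2 * (Real.log ((L:ℝ)+1) / Real.log R⁻¹) ≤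
        4 / Real.log R⁻¹ * Real.sqrt ((L:ℝ)+1) := by
      rw [show 2 * (Real.log ((L:ℝ)+1) / Real.log R⁻¹)
            = (2 * Real.log ((L:ℝ)+1)) / Real.log R⁻¹ by ring,
          show 4 / Real.log R⁻¹ * Real.sqrt ((L:ℝ)+1)
            = (4 * Real.sqrt ((L:ℝ)+1)) / Real.log R⁻¹ by ring]
      rw [div_le_div_iff₀ hloginv hloginv]
      exact mul_le_mul_of_nonneg_right (by linarith [hlog2]) hloginv.le
    linarith
  have htle : Real.sqrt ((L:ℝ)+1) ≤ A + C := by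
    by_contra hcon
    push_neg at hcon
    have h1 : C ≤ C * Real.sqrt ((L:ℝ)+1) := le_mul_of_one_le_right hC0 ht1
    have h2 : (A + C) * Real.sqrt ((L:ℝ)+1) < Real.sqrt ((L:ℝ)+1) * Real.sqrt ((L:ℝ)+1) :=
      mul_lt_mul_of_pos_right hcon (lt_of_lt_of_le one_pos ht1)
    nlinarith [hmain]
  have hfin2 : (L:ℝ) + 1 ≤ (A + C)^2 := by
    rw [← hsqrt]
    exact pow_le_pow_left₀ (Real.sqrt_nonneg _) htle 2
  have hfin3 : (L:ℝ) ≤ (⌈(A + C)^2⌉₊ : ℝ) := le_trans (by linarith) (Nat.le_ceil _)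
  exact_mod_cast hfin3
end

section
/- The induced augmented tree (X, 𝔈) of a Moran set is a hyperbolic graph: there exists δ ≥ 0 such that ⟨x,y⟩ ≥ min(⟨x,z⟩, ⟨z,y⟩) − δ for all x, y, z ∈ X. -/
open Metric Set Filter

attribute [local instance] Classical.propDecidable

noncomputable section

namespace MoranPaper
namespace S3

open Metric Set

variable {d : ℕ} {J : Set (Pt d)} {n : ℕ → ℕ} {r : ℕ → ℝ} {R : ℝ}

section Basic
variable (hD : MoranData d J n r R)
include hD

lemma R_le (k : ℕ) : R ≤ r k := by
  rw [hD.R_inf]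
  exact ciInf_le ⟨0, by rintro x ⟨k, rfl⟩; exact (hD.r_pos k).le⟩ k

lemma R_lt_one : R < 1 := lt_of_le_of_lt (R_le hD 0) (hD.r_lt_one 0)

lemma prodR_pos (k : ℕ) : 0 < prodR r k :=
  Finset.prod_pos fun j _ => hD.r_pos j

lemma prodR_succ (k : ℕ) : prodR r (k + 1) = prodR r k * r k :=
  Finset.prod_range_succ _ _

lemma prodR_zero : prodR r 0 = 1 := Finset.prod_range_zero _

lemma prodR_anti {j k : ℕ} (h : j ≤ k) : prodR r k ≤ prodR r j := by
  induction k with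
  | zero => simpa [Nat.le_zero.mp h] using le_refl _
  | succ k ih =>
    rcases Nat.lt_or_ge j (k+1) with hj | hj
    · calc prodR r (k+1) = prodR r k * r k := prodR_succ hD k
        _ ≤ prodR r k * 1 := by
            have := (hD.r_lt_one k).le
            nlinarith [prodR_pos hD k, hD.r_pos k]
        _ = prodR r k := mul_one _
        _ ≤ prodR r j := ih (Nat.lt_succ_iff.mp hj)
    · have : j = k + 1 := le_antisymm h hj
      simp [this]

lemma prodR_le_one (k : ℕ) : prodR r k ≤ 1 := by
  simpa [prodR_zero hD] using prodR_anti hD (Nat.zero_le k)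

/-- membership description for positive levels. -/
lemma mem_XLevel_pos {m : ℕ} (hm : 1 ≤ m) {w : List ℕ} :
    w ∈ XLevel n r R m ↔
      IsWord n w ∧ prodR r w.length ≤ R ^ m ∧ R ^ m < prodR r (w.length - 1) := by
  unfold XLevel
  rw [if_neg (by omega)]
  rfl

lemma mem_XLevel_zero {w : List ℕ} : w ∈ XLevel n r R 0 ↔ w = [] := by
  unfold XLevel; simp

lemma length_pos_of_mem {m : ℕ} (hm : 1 ≤ m) {w : List ℕ} (hw : w ∈ XLevel n r R m) :
    1 ≤ w.length := by
  rcases (mem_XLevel_pos hD hm).mp hw with ⟨-, h1, -⟩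
  by_contra h
  have : w.length = 0 := by omega
  rw [this, prodR_zero hD] at h1
  have h2 : R ^ m < 1 := pow_lt_one₀ hD.R_pos.le (R_lt_one hD) (by omega)
  linarith

/-- the two key bounds: for `w ∈ X_m`, `R^(m+1) < prodR (len w) ≤ R^m`. -/
lemma prodR_le_of_mem {m : ℕ} {w : List ℕ} (hw : w ∈ XLevel n r R m) :
    prodR r w.length ≤ R ^ m := by
  rcases Nat.eq_zero_or_pos m with rfl | hm
  · have : w = [] := (mem_XLevel_zero hD).mp hw
    simp [this, prodR_zero hD]
  · exact ((mem_XLevel_pos hD hm).mp hw).2.1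

lemma lt_prodR_of_mem {m : ℕ} {w : List ℕ} (hw : w ∈ XLevel n r R m) :
    R ^ (m + 1) < prodR r w.length := by
  rcases Nat.eq_zero_or_pos m with rfl | hm
  · have : w = [] := (mem_XLevel_zero hD).mp hw
    rw [this]
    simpa [prodR_zero hD] using pow_lt_one₀ hD.R_pos.le (R_lt_one hD) one_ne_zero
  · rcases (mem_XLevel_pos hD hm).mp hw with ⟨-, h1, h2⟩
    have hl : 1 ≤ w.length := length_pos_of_mem hD hm hw
    have hstep : prodR r w.length = prodR r (w.length - 1) * r (w.length - 1) := by
      have h : w.length - 1 + 1 = w.length := by omega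
      conv_lhs => rw [← h]
      rw [prodR_succ hD]
    have hrr : R ≤ r (w.length - 1) := R_le hD _
    have hp : 0 < prodR r (w.length - 1) := prodR_pos hD _
    have hRp : 0 < R := hD.R_pos
    rw [hstep, pow_succ]
    nlinarith

lemma level_unique {m m' : ℕ} {w : List ℕ} (hw : w ∈ XLevel n r R m)
    (hw' : w ∈ XLevel n r R m') : m = m' := by
  by_contra hne
  wlog hlt : m < m' generalizing m m'
  · exact this hw' hw (Ne.symm hne) (by omega)
  have h1 := lt_prodR_of_mem hD hw
  have h2 := prodR_le_of_mem hD hw'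
  have : R ^ m' ≤ R ^ (m + 1) :=
    pow_le_pow_of_le_one hD.R_pos.le (R_lt_one hD).le (by omega)
  linarith

lemma length_eq_of_mem {m : ℕ} {w w' : List ℕ} (hw : w ∈ XLevel n r R m)
    (hw' : w' ∈ XLevel n r R m) : w.length = w'.length := by
  by_contra hne
  wlog hlt : w.length < w'.length generalizing w w'
  · exact this hw' hw (Ne.symm hne) (by omega)
  rcases Nat.eq_zero_or_pos m with rfl | hm
  · rw [(mem_XLevel_zero hD).mp hw, (mem_XLevel_zero hD).mp hw'] at hlt; simp at hlt
  · have h1 := prodR_le_of_mem hD hw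
    have h2 := ((mem_XLevel_pos hD hm).mp hw').2.2
    have : prodR r (w'.length - 1) ≤ prodR r w.length := prodR_anti hD (by omega)
    linarith

/-- The canonical word length at scale `s`. -/
def minLen (r : ℕ → ℝ) (R : ℝ) (s : ℕ) : ℕ := sInf {j | prodR r j ≤ R ^ s}

/-- The ancestor of `x` at scale `s`. -/
def anc (r : ℕ → ℝ) (R : ℝ) (s : ℕ) (x : List ℕ) : List ℕ := x.take (minLen r R s)

lemma minLen_zero : minLen r R 0 = 0 := by
  have : 0 ∈ {j | prodR r j ≤ R ^ 0} := by simp [prodR_zero hD]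
  exact le_antisymm (Nat.sInf_le this) (Nat.zero_le _)

lemma anc_zero (x : List ℕ) : anc r R 0 x = [] := by
  rw [anc, minLen_zero hD, List.take_zero]

omit hD in
lemma isWord_prefix {u x : List ℕ} (hu : u <+: x) (hw : IsWord n x) : IsWord n u := by
  intro j hj
  have hlen : u.length ≤ x.length := hu.length_le
  have hget : u.get ⟨j, hj⟩ = x.get ⟨j, by omega⟩ := by
    simp only [List.get_eq_getElem]
    exact (List.IsPrefix.getElem hu _).symm ▸ rfl
  rw [hget]
  exact hw j (by omega)

section scale
variable {m : ℕ} {x : List ℕ} (hx : x ∈ XLevel n r R m)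
include hx

lemma nonemptyScale {s : ℕ} (hs : s ≤ m) : prodR r x.length ≤ R ^ s :=
  (prodR_le_of_mem hD hx).trans
    (pow_le_pow_of_le_one hD.R_pos.le (R_lt_one hD).le hs)

lemma minLen_le {s : ℕ} (hs : s ≤ m) : minLen r R s ≤ x.length :=
  Nat.sInf_le (nonemptyScale hD hx hs)

lemma minLen_spec {s : ℕ} (hs : s ≤ m) : prodR r (minLen r R s) ≤ R ^ s := by
  have h : sInf {j | prodR r j ≤ R ^ s} ∈ {j | prodR r j ≤ R ^ s} :=
    Nat.sInf_mem (Set.nonempty_of_mem (nonemptyScale hD hx hs))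
  exact h

lemma minLen_pos {s : ℕ} (hs : s ≤ m) (hs1 : 1 ≤ s) : 1 ≤ minLen r R s := by
  rcases Nat.eq_zero_or_pos (minLen r R s) with h0 | h; swap
  · exact h
  have := minLen_spec hD hx hs
  rw [h0, prodR_zero hD] at this
  have : R ^ s < 1 := pow_lt_one₀ hD.R_pos.le (R_lt_one hD) (by omega)
  linarith [minLen_spec hD hx hs, this]

lemma lt_prodR_minLen_sub_one {s : ℕ} (hs : s ≤ m) (hs1 : 1 ≤ s) :
    R ^ s < prodR r (minLen r R s - 1) := by
  have h1 : 1 ≤ minLen r R s := minLen_pos hD hx hs hs1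
  by_contra h
  push_neg at h
  have hmem : minLen r R s - 1 ∈ {j | prodR r j ≤ R ^ s} := h
  have h2 : minLen r R s ≤ minLen r R s - 1 := Nat.sInf_le hmem
  omega


lemma isWord_of_mem : IsWord n x := by
  rcases Nat.eq_zero_or_pos m with rfl | hm
  · rw [(mem_XLevel_zero hD).mp hx]; intro j hj; simp at hj
  · exact ((mem_XLevel_pos hD hm).mp hx).1

lemma anc_mem {s : ℕ} (hs : s ≤ m) : anc r R s x ∈ XLevel n r R s := by
  rcases Nat.eq_zero_or_pos s with rfl | hs1
  · rw [anc_zero hD, mem_XLevel_zero hD]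
  · rw [mem_XLevel_pos hD hs1]
    have hlen : (anc r R s x).length = minLen r R s := by
      rw [anc, List.length_take]
      exact min_eq_left (minLen_le hD hx hs)
    refine ⟨isWord_prefix (List.take_prefix _ _) (isWord_of_mem hD hx), ?_, ?_⟩
    · rw [hlen]; exact minLen_spec hD hx hs
    · rw [hlen]; exact lt_prodR_minLen_sub_one hD hx hs hs1

lemma minLen_eq_length : minLen r R m = x.length := by
  have h := length_eq_of_mem hD (anc_mem hD hx le_rfl) hx
  rwa [anc, List.length_take, min_eq_left (minLen_le hD hx le_rfl)] at h

lemma anc_self : anc r R m x = x := by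
  rw [anc, minLen_eq_length hD hx, List.take_length]

/-- a prefix of `x` lying in `X_s` is the ancestor. -/
lemma prefix_unique {s : ℕ} {u : List ℕ} (hu : u <+: x) (hus : u ∈ XLevel n r R s)
    (hs : s ≤ m) : u = anc r R s x := by
  have h1 : u.length = minLen r R s :=
    length_eq_of_mem hD hus (anc_mem hD hx hs) |>.trans
      (by rw [anc, List.length_take, min_eq_left (minLen_le hD hx hs)])
  rw [anc, ← h1]
  exact List.prefix_iff_eq_take.mp hu

end scale

lemma minLen_mono {s s' : ℕ} (hs : s ≤ s') {m : ℕ} {x : List ℕ}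
    (hx : x ∈ XLevel n r R m) (hs' : s' ≤ m) : minLen r R s ≤ minLen r R s' := by
  apply Nat.sInf_le
  show prodR r (minLen r R s') ≤ R ^ s
  exact (minLen_spec hD hx hs').trans
    (pow_le_pow_of_le_one hD.R_pos.le (R_lt_one hD).le hs)

lemma anc_anc {s s' : ℕ} (hs : s ≤ s') {m : ℕ} {x : List ℕ}
    (hx : x ∈ XLevel n r R m) (hs' : s' ≤ m) :
    anc r R s (anc r R s' x) = anc r R s x := by
  rw [anc, anc, anc, List.take_take, min_eq_left (minLen_mono hD hs hx hs')]

lemma anc_prefix_eq {s : ℕ} {u x : List ℕ} (hux : u <+: x) {a m : ℕ}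
    (hu : u ∈ XLevel n r R a) (hx : x ∈ XLevel n r R m) (hs : s ≤ a) :
    anc r R s u = anc r R s x := by
  rcases hux with ⟨t, rfl⟩
  rw [anc, anc, List.take_append]
  have : minLen r R s ≤ u.length := minLen_le hD hu hs
  rw [Nat.sub_eq_zero_of_le this, List.take_zero, List.append_nil]

end Basic

section Jset
variable (hD : MoranData d J n r R) (M : MoranStructure d J n r)
include hD

lemma isWord_append_left {u t : List ℕ} (h : IsWord n (u ++ t)) : IsWord n u :=
  isWord_prefix (⟨t, rfl⟩ : u <+: u ++ t) h

lemma isWord_concat {u : List ℕ} {a : ℕ} (h : IsWord n (u ++ [a])) :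
    1 ≤ a ∧ a ≤ n u.length := by
  have hlen : u.length < (u ++ [a]).length := by simp
  have hget : (u ++ [a]).get ⟨u.length, hlen⟩ = a := by
    simp [List.get_eq_getElem]
  have := h u.length hlen
  rwa [hget] at this

lemma Jset_append_subset (u : List ℕ) :
    ∀ t : List ℕ, IsWord n (u ++ t) → M.Jset (u ++ t) ⊆ M.Jset u := by
  intro t
  induction t using List.reverseRecOn with
  | nil => intro _; simp
  | append_singleton t a ih =>
    intro h
    rw [← List.append_assoc] at h
    have h1 : IsWord n (u ++ t) := isWord_append_left hD h
    have h2 := isWord_concat hD h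
    calc M.Jset (u ++ (t ++ [a])) = M.Jset ((u ++ t) ++ [a]) := by rw [List.append_assoc]
      _ ⊆ M.Jset (u ++ t) := M.nested (u ++ t) h1 a h2.1 h2.2
      _ ⊆ M.Jset u := ih h1

lemma Jset_prefix_subset {u x : List ℕ} (hu : u <+: x) (hx : IsWord n x) :
    M.Jset x ⊆ M.Jset u := by
  rcases hu with ⟨t, rfl⟩
  exact Jset_append_subset hD M u t hx

lemma J_nonempty : J.Nonempty := hD.int_nonempty.mono interior_subset

lemma Jset_nonempty {w : List ℕ} (hw : IsWord n w) : (M.Jset w).Nonempty := by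
  obtain ⟨S, c, hc, hS, hw'⟩ := M.similar w hw
  rw [hw']
  exact (J_nonempty hD).image S

lemma Jset_isBounded {w : List ℕ} (hw : IsWord n w) : Bornology.IsBounded (M.Jset w) := by
  obtain ⟨S, c, hc, hS, hw'⟩ := M.similar w hw
  rw [hw']
  have hlip : LipschitzWith (Real.toNNReal c) S := by
    apply LipschitzWith.of_dist_le_mul
    intro x y
    rw [hS x y, Real.coe_toNNReal c hc.le]
  exact (hD.compact.image hlip.continuous).isBounded

lemma diam_Jset {w : List ℕ} (hw : IsWord n w) :
    Metric.diam (M.Jset w) = prodR r w.length * Metric.diam J := by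
  induction w using List.reverseRecOn with
  | nil => simp [M.root_eq, prodR_zero hD]
  | append_singleton t a ih =>
    have h1 : IsWord n t := isWord_append_left hD hw
    have h2 := isWord_concat hD hw
    rw [M.diam_ratio t h1 a h2.1 h2.2, ih h1]
    simp only [List.length_append, List.length_cons, List.length_nil]
    rw [show t.length + 1 = t.length + 1 from rfl, prodR_succ hD]
    ring

/-- interior point with a ball. -/
lemma exists_ball_subset : ∃ (x₀ : Pt d) (ρ : ℝ), 0 < ρ ∧ ball x₀ ρ ⊆ interior J := by
  obtain ⟨x₀, hx₀⟩ := hD.int_nonempty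
  obtain ⟨ρ, hρ, hball⟩ := Metric.isOpen_iff.mp isOpen_interior x₀ hx₀
  exact ⟨x₀, ρ, hρ, hball⟩

lemma diam_J_pos (hd : 1 ≤ d) {x₀ : Pt d} {ρ : ℝ} (hρ : 0 < ρ)
    (hball : ball x₀ ρ ⊆ interior J) : 0 < Metric.diam J := by
  set y : Pt d := x₀ + (ρ/2) • EuclideanSpace.single (⟨0, hd⟩ : Fin d) (1:ℝ) with hy
  have hdist : dist y x₀ = ρ/2 := by
    rw [hy, dist_eq_norm]
    simp [norm_smul, EuclideanSpace.norm_single, abs_of_pos (half_pos hρ), abs_of_pos hρ]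
  have hyJ : y ∈ J := interior_subset (hball (by simp [mem_ball, hdist, half_lt_self hρ]))
  have hxJ : x₀ ∈ J := interior_subset (hball (by simp [mem_ball, hρ]))
  have := Metric.dist_le_diam_of_mem hD.compact.isBounded hyJ hxJ
  linarith

/-- A similarity of Euclidean space is surjective. -/
lemma similarity_surjective {S : Pt d → Pt d} {c : ℝ} (hc : 0 < c)
    (hS : ∀ x y, dist (S x) (S y) = c * dist x y) : Function.Surjective S := by
  set f : Pt d → Pt d := fun x => c⁻¹ • S x with hf
  have hfi : Isometry f := by
    apply Isometry.of_dist_eq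
    intro x y
    simp only [hf, dist_smul₀, hS, Real.norm_eq_abs, abs_inv, abs_of_pos hc]
    field_simp
  let φ := hfi.affineIsometryOfStrictConvexSpace
  have hφ : ∀ x, φ x = f x := fun _ => rfl
  have hlin : Function.Surjective φ.linearIsometry.toLinearMap :=
    (LinearMap.injective_iff_surjective).mp φ.linearIsometry.injective
  have hφs : Function.Surjective f := by
    intro y
    obtain ⟨v, hv⟩ := hlin (y - f 0)
    refine ⟨v + 0, ?_⟩
    have h2 : φ (v +ᵥ (0 : Pt d)) = φ.linearIsometry v +ᵥ φ 0 := φ.map_vadd _ _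
    have h3 : f (v + 0) = φ.linearIsometry.toLinearMap v + f 0 := by
      rw [← hφ, ← hφ]; exact h2
    rw [h3, hv]; abel
  intro y
  obtain ⟨x, hx⟩ := hφs (c⁻¹ • y)
  refine ⟨x, ?_⟩
  have h4 : c • f x = c • (c⁻¹ • y) := by rw [hx]
  simpa [hf, smul_smul, mul_inv_cancel₀ hc.ne'] using h4

lemma diam_image {S : Pt d → Pt d} {c : ℝ} (hc : 0 < c)
    (hS : ∀ x y, dist (S x) (S y) = c * dist x y) {A : Set (Pt d)}
    (hA : Bornology.IsBounded A) : Metric.diam (S '' A) = c * Metric.diam A := by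
  have hlip : LipschitzWith (Real.toNNReal c) S := by
    apply LipschitzWith.of_dist_le_mul
    intro x y
    rw [hS x y, Real.coe_toNNReal c hc.le]
  have hSA : Bornology.IsBounded (S '' A) := hlip.isBounded_image hA
  apply le_antisymm
  · apply Metric.diam_le_of_forall_dist_le (by positivity)
    rintro _ ⟨x, hx, rfl⟩ _ ⟨y, hy, rfl⟩
    rw [hS]
    exact mul_le_mul_of_nonneg_left (Metric.dist_le_diam_of_mem hA hx hy) hc.le
  · have h : Metric.diam A ≤ c⁻¹ * Metric.diam (S '' A) := by
      apply Metric.diam_le_of_forall_dist_le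
        (by positivity)
      intro x hx y hy
      have h2 := Metric.dist_le_diam_of_mem hSA (Set.mem_image_of_mem S hx)
        (Set.mem_image_of_mem S hy)
      rw [hS] at h2
      rw [le_inv_mul_iff₀ hc]
      exact h2
    calc c * Metric.diam A ≤ c * (c⁻¹ * Metric.diam (S '' A)) :=
          mul_le_mul_of_nonneg_left h hc.le
      _ = Metric.diam (S '' A) := by field_simp

/-- ratio of the similarity of `Jset w` equals `prodR r w.length`. -/
lemma exists_similar_prodR (hd : 1 ≤ d) {w : List ℕ} (hw : IsWord n w) :
    ∃ S : Pt d → Pt d, (∀ x y, dist (S x) (S y) = prodR r w.length * dist x y) ∧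
      M.Jset w = S '' J := by
  obtain ⟨S, c, hc, hS, hw'⟩ := M.similar w hw
  obtain ⟨x₀, ρ, hρ, hball⟩ := exists_ball_subset hD
  have hDJ : 0 < Metric.diam J := diam_J_pos hD hd hρ hball
  have h1 : Metric.diam (M.Jset w) = c * Metric.diam J := by
    rw [hw', diam_image hD hc hS hD.compact.isBounded]
  have h2 := diam_Jset hD M hw
  have hceq : c = prodR r w.length := by
    have := h1.symm.trans h2
    exact mul_right_cancel₀ hDJ.ne' this
  exact ⟨S, fun x y => by rw [hS, hceq], hw'⟩

/-- each piece contains a definite ball in its interior. -/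
lemma ball_subset_interior_Jset (hd : 1 ≤ d) {x₀ : Pt d} {ρ : ℝ} (hρ : 0 < ρ)
    (hball : ball x₀ ρ ⊆ interior J) {w : List ℕ} (hw : IsWord n w) :
    ∃ ctr, ball ctr (prodR r w.length * ρ) ⊆ interior (M.Jset w) := by
  obtain ⟨S, hS, hw'⟩ := exists_similar_prodR hD M hd hw
  set c := prodR r w.length with hc
  have hcpos : 0 < c := prodR_pos hD _
  have hsurj : Function.Surjective S := similarity_surjective hD hcpos hS
  refine ⟨S x₀, ?_⟩
  have himg : ball (S x₀) (c * ρ) ⊆ S '' ball x₀ ρ := by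
    intro y hy
    obtain ⟨x, rfl⟩ := hsurj y
    refine ⟨x, ?_, rfl⟩
    have h2 := mem_ball.mp hy
    rw [dist_comm, hS] at h2
    rw [mem_ball, dist_comm]
    nlinarith
  have hsub : S '' ball x₀ ρ ⊆ M.Jset w := by
    rw [hw']
    exact Set.image_mono (hball.trans interior_subset)
  have : ball (S x₀) (c * ρ) ⊆ interior (M.Jset w) :=
    interior_maximal (himg.trans hsub) isOpen_ball
  simpa [hc] using this

/-- pieces with the same generation have disjoint interiors. -/
lemma interior_disjoint : ∀ (k : ℕ) {u v : List ℕ}, IsWord n u → IsWord n v →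
    u.length = k → v.length = k → u ≠ v →
    interior (M.Jset u) ∩ interior (M.Jset v) = ∅ := by
  intro k
  induction k with
  | zero =>
    intro u v _ _ hu hv hne
    exact absurd (List.length_eq_zero_iff.mp hu ▸ List.length_eq_zero_iff.mp hv ▸ rfl :
      u = v) hne
  | succ k ih =>
    intro u v hu hv hlu hlv hne
    rcases List.eq_nil_or_concat u with rfl | ⟨u', a, rfl⟩
    · simp at hlu
    rcases List.eq_nil_or_concat v with rfl | ⟨v', b, rfl⟩
    · simp at hlv
    simp only [List.concat_eq_append] at hu hv hlu hlv hne ⊢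
    have hu' : IsWord n u' := isWord_append_left hD hu
    have hv' : IsWord n v' := isWord_append_left hD hv
    have hlu' : u'.length = k := by simpa using hlu
    have hlv' : v'.length = k := by simpa using hlv
    have ha := isWord_concat hD hu
    have hb := isWord_concat hD hv
    by_cases huv : u' = v'
    · rw [← huv] at hb ⊢
      exact M.disjoint_int u' hu' a b ha.1 ha.2 hb.1 hb.2 (fun h => hne (by rw [h, huv]))
    · have h1 : interior (M.Jset (u' ++ [a])) ⊆ interior (M.Jset u') :=
        interior_mono (M.nested u' hu' a ha.1 ha.2)
      have h2 : interior (M.Jset (v' ++ [b])) ⊆ interior (M.Jset v') :=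
        interior_mono (M.nested v' hv' b hb.1 hb.2)
      have h3 := ih hu' hv' hlu' hlv' huv
      apply Set.eq_empty_of_subset_empty
      calc interior (M.Jset (u' ++ [a])) ∩ interior (M.Jset (v' ++ [b]))
          ⊆ interior (M.Jset u') ∩ interior (M.Jset v') := Set.inter_subset_inter h1 h2
        _ = ∅ := h3

end Jset


section Chains
variable (M : MoranStructure d J n r)

/-- A horizontal chain at scale `s` of combinatorial length `q`. -/
def CH (R : ℝ) (s q : ℕ) (u v : List ℕ) : Prop :=
  ∃ f : ℕ → List ℕ, f 0 = u ∧ f q = v ∧ (∀ i ≤ q, f i ∈ XLevel n r R s) ∧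
    ∀ i < q, (M.Jset (f i) ∩ M.Jset (f (i + 1))).Nonempty

variable (hD : MoranData d J n r R)
include hD

lemma CH_refl {s : ℕ} {u : List ℕ} (hu : u ∈ XLevel n r R s) : CH M R s 0 u u :=
  ⟨fun _ => u, rfl, rfl, fun _ _ => hu, fun i h => absurd h (Nat.not_lt_zero i)⟩

lemma CH_pad {s q q' : ℕ} {u v : List ℕ} (h : CH M R s q u v) (hq : q ≤ q') :
    CH M R s q' u v := by
  obtain ⟨f, h0, hq'', hmem, hstep⟩ := h
  refine ⟨fun i => f (min i q), by simp [h0], by simp [min_eq_right hq, hq''], ?_, ?_⟩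
  · intro i _
    exact hmem _ (min_le_right _ _)
  · intro i hi
    rcases Nat.lt_or_ge i q with h1 | h1
    · have e1 : min i q = i := min_eq_left h1.le
      have e2 : min (i+1) q = i + 1 := min_eq_left h1
      simp only [e1, e2]
      exact hstep i h1
    · have e1 : min i q = q := min_eq_right h1
      have e2 : min (i+1) q = q := min_eq_right (by omega)
      simp only [e1, e2, Set.inter_self]
      exact Jset_nonempty hD M (isWord_of_mem hD (hmem q le_rfl))

lemma CH_proj {s t q : ℕ} {u v : List ℕ} (h : CH M R s q u v) (hts : t ≤ s) :
    CH M R t q (anc r R t u) (anc r R t v) := by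
  obtain ⟨f, h0, hq, hmem, hstep⟩ := h
  refine ⟨fun i => anc r R t (f i), by simp only [h0], by simp only [hq], ?_, ?_⟩
  · intro i hi
    exact anc_mem hD (hmem i hi) hts
  · intro i hi
    have h1 : M.Jset (f i) ⊆ M.Jset (anc r R t (f i)) :=
      Jset_prefix_subset hD M (List.take_prefix _ _) (isWord_of_mem hD (hmem i hi.le))
    have h2 : M.Jset (f (i+1)) ⊆ M.Jset (anc r R t (f (i+1))) :=
      Jset_prefix_subset hD M (List.take_prefix _ _) (isWord_of_mem hD (hmem (i+1) hi))
    exact (hstep i hi).mono (Set.inter_subset_inter h1 h2)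

lemma CH_trans {s q q' : ℕ} {u v w : List ℕ} (h : CH M R s q u v)
    (h' : CH M R s q' v w) : CH M R s (q + q') u w := by
  obtain ⟨f, f0, fq, fmem, fstep⟩ := h
  obtain ⟨g, g0, gq, gmem, gstep⟩ := h'
  refine ⟨fun i => if i ≤ q then f i else g (i - q), by simp [f0], ?_, ?_, ?_⟩
  · by_cases hq' : q' = 0
    · subst hq'
      simp only [add_zero, le_refl, if_pos]
      rw [fq, ← g0, ← gq]
    · simp only [if_neg (show ¬ q + q' ≤ q by omega)]
      have e : q + q' - q = q' := by omega
      rw [e, gq]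
  · intro i hi
    by_cases h1 : i ≤ q
    · simp only [if_pos h1]; exact fmem i h1
    · simp only [if_neg h1]; exact gmem (i - q) (by omega)
  · intro i hi
    by_cases h1 : i + 1 ≤ q
    · simp only [if_pos (show i ≤ q by omega), if_pos h1]
      exact fstep i (by omega)
    · by_cases h2 : i ≤ q
      · have hiq : i = q := by omega
        subst hiq
        simp only [if_pos le_rfl, if_neg h1, fq, ← g0]
        have e : i + 1 - i = 1 := by omega
        rw [e]
        exact gstep 0 (by omega)
      · simp only [if_neg h2, if_neg h1]
        have e : i + 1 - q = (i - q) + 1 := by omega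
        rw [e]
        exact gstep (i - q) (by omega)

lemma CH_single {s : ℕ} {u v : List ℕ} (hu : u ∈ XLevel n r R s)
    (hv : v ∈ XLevel n r R s) (hi : (M.Jset u ∩ M.Jset v).Nonempty) :
    CH M R s 1 u v := by
  refine ⟨fun i => if i = 0 then u else v, by simp, by simp, ?_, ?_⟩
  · intro i _
    by_cases h : i = 0 <;> simp [h, hu, hv]
  · intro i hi'
    have : i = 0 := by omega
    subst this
    simpa using hi

lemma adj_cases {u v : List ℕ} (h : (AugGraph M R).Adj u v) :
    (∃ m, 1 ≤ m ∧ v ∈ XLevel n r R m ∧ u ∈ XLevel n r R (m - 1) ∧ u <+: v) ∨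
    (∃ m, 1 ≤ m ∧ u ∈ XLevel n r R m ∧ v ∈ XLevel n r R (m - 1) ∧ v <+: u) ∨
    (∃ m, 1 ≤ m ∧ u ∈ XLevel n r R m ∧ v ∈ XLevel n r R m ∧
      (M.Jset u ∩ M.Jset v).Nonempty) := by
  rcases h with (⟨hne, hpre, m, hm, hv, hu⟩ | ⟨hne, hpre, m, hm, hu, hv⟩) |
    ⟨hne, m, hm, hu, hv, hi⟩
  · exact Or.inl ⟨m, hm, hv, hu, hpre⟩
  · exact Or.inr (Or.inl ⟨m, hm, hu, hv, hpre⟩)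
  · exact Or.inr (Or.inr ⟨m, hm, hu, hv, hi⟩)

/-- Every walk between vertices of the augmented tree yields a horizontal chain
at some scale `s`, with the key length bound. -/
lemma walk_chain {x y : List ℕ} (W : (AugGraph M R).Walk x y) :
    ∀ {a b : ℕ}, x ∈ XLevel n r R a → y ∈ XLevel n r R b →
    ∃ s q, s ≤ a ∧ s ≤ b ∧ CH M R s q (anc r R s x) (anc r R s y) ∧
      (q : ℤ) + ((a : ℤ) - s) + ((b : ℤ) - s) ≤ W.length := by
  induction W with
  | nil =>
    intro a b hx hy
    have hab : a = b := level_unique hD hx hy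
    subst hab
    exact ⟨a, 0, le_rfl, le_rfl, by rw [anc_self hD hx]; exact CH_refl M hD hx,
      by simp⟩
  | @cons x x₂ y h W ih =>
    intro a b hx hy
    rcases adj_cases M hD h with ⟨m, hm, hx₂, hx', hpre⟩ |
      (⟨m, hm, hx', hx₂, hpre⟩ | ⟨m, hm, hx', hx₂, hi⟩)
    · -- x is the parent of x₂ (level goes up by one)
      have ha : a = m - 1 := level_unique hD hx hx'
      obtain ⟨s, q, hsm, hsb, hch, hbd⟩ := ih hx₂ hy
      by_cases hsa : s ≤ a
      · have he : anc r R s x = anc r R s x₂ := anc_prefix_eq hD hpre hx hx₂ hsa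
        refine ⟨s, q, hsa, hsb, by rwa [he], ?_⟩
        rw [SimpleGraph.Walk.length_cons]
        push_cast
        omega
      · have hsm' : s = m := by omega
        subst hsm'
        have ham : a ≤ s := by omega
        have hch2 := CH_proj M hD hch ham
        rw [anc_self hD hx₂] at hch2
        have e1 : anc r R a x₂ = x := (prefix_unique hD hx₂ hpre hx ham).symm
        have e2 : anc r R a (anc r R s y) = anc r R a y := anc_anc hD ham hy hsb
        rw [e1, e2] at hch2
        refine ⟨a, q, le_rfl, by omega, by rwa [anc_self hD hx], ?_⟩
        rw [SimpleGraph.Walk.length_cons]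
        push_cast
        omega
    · -- x₂ is the parent of x (level goes down by one)
      have ha : a = m := level_unique hD hx hx'
      subst ha
      obtain ⟨s, q, hsm, hsb, hch, hbd⟩ := ih hx₂ hy
      have he : anc r R s x₂ = anc r R s x := anc_prefix_eq hD hpre hx₂ hx hsm
      refine ⟨s, q, by omega, hsb, by rwa [he] at hch, ?_⟩
      rw [SimpleGraph.Walk.length_cons]
      push_cast
      omega
    · -- horizontal step
      have ha : a = m := level_unique hD hx hx'
      subst ha
      obtain ⟨s, q, hsm, hsb, hch, hbd⟩ := ih hx₂ hy
      have h1 : CH M R s 1 (anc r R s x) (anc r R s x₂) := by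
        apply CH_single M hD (anc_mem hD hx hsm) (anc_mem hD hx₂ hsm)
        have hs1 : M.Jset x ⊆ M.Jset (anc r R s x) :=
          Jset_prefix_subset hD M (List.take_prefix _ _) (isWord_of_mem hD hx)
        have hs2 : M.Jset x₂ ⊆ M.Jset (anc r R s x₂) :=
          Jset_prefix_subset hD M (List.take_prefix _ _) (isWord_of_mem hD hx₂)
        exact hi.mono (Set.inter_subset_inter hs1 hs2)
      refine ⟨s, 1 + q, hsm, hsb, CH_trans M hD h1 hch, ?_⟩
      rw [SimpleGraph.Walk.length_cons]
      push_cast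
      omega

end Chains


section Walks
variable (M : MoranStructure d J n r) (hD : MoranData d J n r R)
include hD

lemma anc_length {m s : ℕ} {x : List ℕ} (hx : x ∈ XLevel n r R m) (hs : s ≤ m) :
    (anc r R s x).length = minLen r R s := by
  rw [anc, List.length_take]
  exact min_eq_left (minLen_le hD hx hs)

lemma minLen_lt {m s s' : ℕ} {x : List ℕ} (hx : x ∈ XLevel n r R m) (hss : s < s')
    (hs' : s' ≤ m) : minLen r R s < minLen r R s' := by
  have hle : minLen r R s ≤ minLen r R s' := minLen_mono hD (le_of_lt hss) hx hs'
  have h1 : 1 ≤ minLen r R s' := minLen_pos hD hx hs' (by omega)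
  rcases Nat.eq_zero_or_pos s with rfl | hs1
  · rw [minLen_zero hD]; omega
  · rcases lt_or_eq_of_le hle with h | h
    · exact h
    · exfalso
      have hspec := minLen_spec hD hx hs'
      have hlt := lt_prodR_minLen_sub_one hD hx (by omega : s ≤ m) hs1
      have hml : 1 ≤ minLen r R s := minLen_pos hD hx (by omega) hs1
      have hstep : prodR r (minLen r R s) =
          prodR r (minLen r R s - 1) * r (minLen r R s - 1) := by
        have e : minLen r R s - 1 + 1 = minLen r R s := by omega
        conv_lhs => rw [← e]
        rw [prodR_succ hD]
      have h2 : R ^ (s + 1) < prodR r (minLen r R s) := by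
        rw [hstep, pow_succ]
        nlinarith [R_le hD (minLen r R s - 1), hD.R_pos,
          prodR_pos hD (minLen r R s - 1)]
      have h3 : R ^ s' ≤ R ^ (s + 1) :=
        pow_le_pow_of_le_one hD.R_pos.le (R_lt_one hD).le (by omega)
      rw [h] at h2
      linarith

lemma anc_parent {m s : ℕ} {x : List ℕ} (hx : x ∈ XLevel n r R m) (hs : s + 1 ≤ m) :
    IsParent n r R (anc r R s x) (anc r R (s + 1) x) := by
  refine ⟨?_, ?_, s + 1, by omega, anc_mem hD hx hs, ?_⟩
  · intro h
    have := congrArg List.length h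
    rw [anc_length hD hx (by omega), anc_length hD hx hs] at this
    exact absurd this (minLen_lt hD hx (by omega) hs).ne
  · rw [← anc_anc hD (by omega : s ≤ s + 1) hx hs]
    exact List.take_prefix _ _
  · rw [Nat.add_sub_cancel]
    exact anc_mem hD hx (by omega)

lemma walk_up : ∀ (t : ℕ) {m : ℕ} {x : List ℕ}, x ∈ XLevel n r R m → t ≤ m →
    ∃ W : (AugGraph M R).Walk x (anc r R (m - t) x), W.length = t := by
  intro t
  induction t with
  | zero =>
    intro m x hx _
    exact ⟨(SimpleGraph.Walk.nil).copy rfl (by rw [Nat.sub_zero, anc_self hD hx]),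
      by simp⟩
  | succ t ih =>
    intro m x hx ht
    have hm1 : 1 ≤ m := by omega
    have hpar : IsParent n r R (anc r R (m - 1) x) x := by
      have := anc_parent hD (m := m) (s := m - 1) hx (by omega)
      rwa [show m - 1 + 1 = m by omega, anc_self hD hx] at this
    have hadj : (AugGraph M R).Adj x (anc r R (m - 1) x) :=
      Or.inl (Or.inr hpar)
    have hx' : anc r R (m - 1) x ∈ XLevel n r R (m - 1) := anc_mem hD hx (by omega)
    obtain ⟨W', hW'⟩ := ih hx' (by omega)
    have he : anc r R (m - 1 - t) (anc r R (m - 1) x) = anc r R (m - (t + 1)) x := by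
      rw [anc_anc hD (by omega : m - 1 - t ≤ m - 1) hx (by omega)]
      congr 1
      omega
    exact ⟨SimpleGraph.Walk.cons hadj (W'.copy rfl he), by simp [hW']⟩

lemma walk_of_CH : ∀ (q : ℕ) {s : ℕ} {u v : List ℕ}, CH M R s q u v →
    ∃ W : (AugGraph M R).Walk u v, W.length ≤ q := by
  intro q
  induction q with
  | zero =>
    intro s u v ⟨f, f0, fq, _, _⟩
    exact ⟨(SimpleGraph.Walk.nil).copy rfl (f0 ▸ fq : u = v), by simp⟩
  | succ q ih =>
    rintro s u v ⟨f, f0, fq, fmem, fstep⟩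
    have hch' : CH M R s q (f 1) v :=
      ⟨fun i => f (i + 1), rfl, fq, fun i hi => fmem (i + 1) (by omega),
        fun i hi => fstep (i + 1) (by omega)⟩
    obtain ⟨W', hW'⟩ := ih hch'
    by_cases h01 : u = f 1
    · exact ⟨W'.copy h01.symm rfl, by simpa using hW'.trans (by omega)⟩
    · rcases Nat.eq_zero_or_pos s with rfl | hs1
      · exfalso
        have h0 := (mem_XLevel_zero hD).mp (fmem 0 (by omega))
        have h1 := (mem_XLevel_zero hD).mp (fmem 1 (by omega))
        rw [f0] at h0
        exact h01 (h0.trans h1.symm)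
      · have hadj : (AugGraph M R).Adj u (f 1) := by
          refine Or.inr ⟨h01, s, hs1, ?_, fmem 1 (by omega), ?_⟩
          · rw [← f0]; exact fmem 0 (by omega)
          · have := fstep 0 (by omega)
            rwa [f0] at this
        exact ⟨SimpleGraph.Walk.cons hadj W', by simpa using hW'.trans (by omega)⟩

lemma walk_up' {m s : ℕ} {x : List ℕ} (hx : x ∈ XLevel n r R m) (hs : s ≤ m) :
    ∃ W : (AugGraph M R).Walk x (anc r R s x), W.length = m - s := by
  obtain ⟨W, hW⟩ := walk_up M hD (m - s) hx (by omega)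
  refine ⟨W.copy rfl (by rw [show m - (m - s) = s by omega]), ?_⟩
  rw [SimpleGraph.Walk.length_copy, hW]

lemma dist_le_of_CH {x y : List ℕ} {a b s q : ℕ} (hx : x ∈ XLevel n r R a)
    (hy : y ∈ XLevel n r R b) (hsa : s ≤ a) (hsb : s ≤ b)
    (hch : CH M R s q (anc r R s x) (anc r R s y)) :
    (AugGraph M R).dist x y ≤ (a - s) + (b - s) + q := by
  obtain ⟨W1, hW1⟩ := walk_up' M hD hx hsa
  obtain ⟨W3, hW3⟩ := walk_up' M hD hy hsb
  obtain ⟨W2, hW2⟩ := walk_of_CH M hD q hch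
  have h := SimpleGraph.dist_le ((W1.append W2).append W3.reverse)
  rw [SimpleGraph.Walk.length_append, SimpleGraph.Walk.length_append,
    SimpleGraph.Walk.length_reverse, hW1, hW3] at h
  omega

lemma root_mem : ([] : List ℕ) ∈ XLevel n r R 0 := (mem_XLevel_zero hD).mpr rfl

lemma dist_root {x : List ℕ} {a : ℕ} (hx : x ∈ XLevel n r R a) :
    (AugGraph M R).dist [] x = a := by
  obtain ⟨W, hW⟩ := walk_up' M hD hx (Nat.zero_le a)
  have hW0 : (AugGraph M R).Walk x [] := W.copy rfl (anc_zero hD x)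
  have hle : (AugGraph M R).dist [] x ≤ a := by
    have h := SimpleGraph.dist_le ((W.copy rfl (anc_zero hD x)).reverse)
    rw [SimpleGraph.Walk.length_reverse, SimpleGraph.Walk.length_copy, hW,
      Nat.sub_zero] at h
    exact h
  have hreach : (AugGraph M R).Reachable [] x := ⟨(W.copy rfl (anc_zero hD x)).reverse⟩
  obtain ⟨P, hP⟩ := hreach.exists_walk_length_eq_dist
  obtain ⟨s, q, hs0, _, _, hbd⟩ := walk_chain M hD P (root_mem hD) hx
  have hs : s = 0 := by omega
  subst hs
  rw [hP] at hbd
  omega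

end Walks


section Packing
open MeasureTheory
open scoped ENNReal NNReal
variable (M : MoranStructure d J n r) (hD : MoranData d J n r R)
include hD

lemma diam_Jset_le {s : ℕ} {w : List ℕ} (hw : w ∈ XLevel n r R s) :
    Metric.diam (M.Jset w) ≤ Metric.diam J * R ^ s := by
  rw [diam_Jset hD M (isWord_of_mem hD hw), mul_comm]
  exact mul_le_mul_of_nonneg_left (prodR_le_of_mem hD hw) Metric.diam_nonneg

lemma chain_spread {s q : ℕ} {f : ℕ → List ℕ}
    (hmem : ∀ i ≤ q, f i ∈ XLevel n r R s)
    (hstep : ∀ i < q, (M.Jset (f i) ∩ M.Jset (f (i + 1))).Nonempty)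
    {p₀ : Pt d} (hp₀ : p₀ ∈ M.Jset (f 0)) :
    ∀ i ≤ q, M.Jset (f i) ⊆
      closedBall p₀ (((i : ℝ) + 1) * (Metric.diam J * R ^ s)) := by
  intro i
  induction i with
  | zero =>
    intro _ z hz
    rw [mem_closedBall]
    calc dist z p₀ ≤ Metric.diam (M.Jset (f 0)) :=
          Metric.dist_le_diam_of_mem
            (Jset_isBounded hD M (isWord_of_mem hD (hmem 0 (Nat.zero_le q)))) hz hp₀
      _ ≤ Metric.diam J * R ^ s := diam_Jset_le M hD (hmem 0 (Nat.zero_le q))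
      _ = (((0 : ℕ) : ℝ) + 1) * (Metric.diam J * R ^ s) := by push_cast; ring
  | succ i ih =>
    intro hi z hz
    obtain ⟨w, hw1, hw2⟩ := hstep i (by omega)
    have hwball := ih (by omega) hw1
    rw [mem_closedBall] at hwball ⊢
    calc dist z p₀ ≤ dist z w + dist w p₀ := dist_triangle _ _ _
      _ ≤ Metric.diam (M.Jset (f (i + 1))) + (i + 1) * (Metric.diam J * R ^ s) := by
          apply add_le_add _ hwball
          exact Metric.dist_le_diam_of_mem
            (Jset_isBounded hD M (isWord_of_mem hD (hmem (i+1) hi))) hz hw2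
      _ ≤ Metric.diam J * R ^ s + (i + 1) * (Metric.diam J * R ^ s) :=
          add_le_add_left (diam_Jset_le M hD (hmem (i+1) hi)) _
      _ = (((i + 1 : ℕ) : ℝ) + 1) * (Metric.diam J * R ^ s) := by push_cast; ring

/-- loop erasure: a chain whose vertices lie in a finite set `A` can be shortened
to a chain of length `< A.ncard`. -/
lemma chain_erase {s : ℕ} {A : Set (List ℕ)} (hA : A.Finite) :
    ∀ q {u v : List ℕ} (f : ℕ → List ℕ), f 0 = u → f q = v →
    (∀ i ≤ q, f i ∈ XLevel n r R s) →
    (∀ i < q, (M.Jset (f i) ∩ M.Jset (f (i + 1))).Nonempty) →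
    (∀ i ≤ q, f i ∈ A) →
    ∃ q', q' + 1 ≤ A.ncard ∧ CH M R s q' u v := by
  intro q
  induction q using Nat.strong_induction_on with
  | _ q ih =>
    intro u v f f0 fq fmem fstep fA
    by_cases hrep : ∃ i j, i < j ∧ j ≤ q ∧ f i = f j
    · obtain ⟨i, j, hij, hjq, hfij⟩ := hrep
      set e := j - i with he
      have he1 : 1 ≤ e := by omega
      set q₂ := q - e with hq₂
      have hq₂lt : q₂ < q := by omega
      set g : ℕ → List ℕ := fun k => if k ≤ i then f k else f (k + e) with hg
      have hg0 : g 0 = u := by simp [hg, f0]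
      have hgq : g q₂ = v := by
        by_cases h : q₂ ≤ i
        · have h1 : q₂ = i := by omega
          have h2 : j = q := by omega
          rw [hg]
          simp only []
          rw [if_pos h, h1, hfij, h2, fq]
        · rw [hg]
          simp only [if_neg h]
          rw [show q₂ + e = q by omega, fq]
      have hgmem : ∀ k ≤ q₂, g k ∈ XLevel n r R s := by
        intro k hk
        rw [hg]
        by_cases h : k ≤ i
        · simp only [if_pos h]; exact fmem k (by omega)
        · simp only [if_neg h]; exact fmem (k + e) (by omega)
      have hgstep : ∀ k < q₂, (M.Jset (g k) ∩ M.Jset (g (k + 1))).Nonempty := by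
        intro k hk
        rw [hg]
        by_cases h1 : k + 1 ≤ i
        · simp only [if_pos (show k ≤ i by omega), if_pos h1]
          exact fstep k (by omega)
        · by_cases h2 : k ≤ i
          · have hki : k = i := by omega
            simp only [if_pos h2, if_neg h1, hki]
            rw [hfij, show i + 1 + e = j + 1 by omega]
            simp only [if_pos (le_refl i), if_neg (show ¬ i + 1 ≤ i by omega)]
            exact fstep j (by omega)
          · simp only [if_neg h2, if_neg h1, show k + 1 + e = k + e + 1 by omega]
            exact fstep (k + e) (by omega)
      have hgA : ∀ k ≤ q₂, g k ∈ A := by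
        intro k hk
        rw [hg]
        by_cases h : k ≤ i
        · simp only [if_pos h]; exact fA k (by omega)
        · simp only [if_neg h]; exact fA (k + e) (by omega)
      exact ih q₂ hq₂lt g hg0 hgq hgmem hgstep hgA
    · push_neg at hrep
      have hinj : Set.InjOn f (Set.Iic q) := by
        intro i hi j hj heq
        rcases Nat.lt_trichotomy i j with h | h | h
        · exact absurd heq (by intro he; exact absurd he (by
            have := hrep i j h hj; exact this))
        · exact h
        · exact absurd heq.symm (hrep j i h hi)
      have hcard : q + 1 ≤ A.ncard := by
        have h1 : (f '' Set.Iic q).ncard = (Set.Iic q).ncard :=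
          Set.ncard_image_of_injOn hinj
        have h2 : (Set.Iic q).ncard = q + 1 := by
          rw [show Set.Iic q = ↑(Finset.Iic q) by simp, Set.ncard_coe_finset]
          simp
        have h3 : (f '' Set.Iic q) ⊆ A := by
          rintro _ ⟨i, hi, rfl⟩
          exact fA i hi
        have := Set.ncard_le_ncard h3 hA
        omega
      exact ⟨q, hcard, f, f0, fq, fmem, fstep⟩

/-- volume packing: a finite family of pieces on level `s'` inside a common ball
has cardinality controlled by the radius. -/
lemma packing_count (hd : 1 ≤ d) {x₀ : Pt d} {ρ₀ : ℝ} (hρ : 0 < ρ₀)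
    (hball : ball x₀ ρ₀ ⊆ interior J) {s' : ℕ} {A : Set (List ℕ)} (hA : A.Finite)
    (hmem : ∀ a ∈ A, a ∈ XLevel n r R s') {p₀ : Pt d} {Q : ℝ} (hQpos : 0 ≤ Q)
    (hQ : ∀ a ∈ A, M.Jset a ⊆ closedBall p₀ Q) :
    (A.ncard : ℝ) * (ρ₀ * R ^ (s' + 1)) ^ d ≤ Q ^ d := by
  classical
  haveI : Nonempty (Fin d) := ⟨⟨0, hd⟩⟩
  set F := hA.toFinset with hF
  set rad : ℝ := ρ₀ * R ^ (s' + 1) with hrad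
  have hradpos : 0 < rad := by
    have := hD.R_pos
    positivity
  set B := volume (ball (0 : Pt d) 1) with hB
  have hB0 : B ≠ 0 := (measure_ball_pos _ _ one_pos).ne'
  have hBtop : B ≠ ⊤ := measure_ball_lt_top.ne
  -- each piece contains a ball of radius `rad` in its interior
  have hkey : ∀ a ∈ F, ENNReal.ofReal (rad ^ d) * B ≤ volume (interior (M.Jset a)) := by
    intro a haF
    have haA : a ∈ A := hA.mem_toFinset.mp haF
    have haX := hmem a haA
    have haW : IsWord n a := isWord_of_mem hD haX
    obtain ⟨ctr, hctr⟩ := ball_subset_interior_Jset hD M hd hρ hball haW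
    have hrlt : rad ≤ prodR r a.length * ρ₀ := by
      rw [hrad]
      have := (lt_prodR_of_mem hD haX).le
      nlinarith
    have hsub : ball ctr rad ⊆ interior (M.Jset a) :=
      (ball_subset_ball hrlt).trans hctr
    calc ENNReal.ofReal (rad ^ d) * B
        = volume (ball ctr rad) := by
          rw [Measure.addHaar_ball volume ctr hradpos.le, finrank_euclideanSpace_fin]
      _ ≤ volume (interior (M.Jset a)) := measure_mono hsub
  -- the interiors are pairwise disjoint
  have hdisj : (F : Set (List ℕ)).PairwiseDisjoint
      (fun a => interior (M.Jset a)) := by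
    intro a haF b hbF hab
    have haA : a ∈ A := hA.mem_toFinset.mp haF
    have hbA : b ∈ A := hA.mem_toFinset.mp hbF
    have hlen : a.length = b.length := length_eq_of_mem hD (hmem a haA) (hmem b hbA)
    have := interior_disjoint hD M a.length (isWord_of_mem hD (hmem a haA))
      (isWord_of_mem hD (hmem b hbA)) rfl hlen.symm hab
    exact Set.disjoint_iff_inter_eq_empty.mpr this
  have hmeas : ∀ a ∈ F, MeasurableSet (interior (M.Jset a)) :=
    fun a _ => isOpen_interior.measurableSet
  have hsum : ∑ a ∈ F, volume (interior (M.Jset a)) =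
      volume (⋃ a ∈ F, interior (M.Jset a)) :=
    (measure_biUnion_finset hdisj hmeas).symm
  have hsub2 : (⋃ a ∈ F, interior (M.Jset a)) ⊆ closedBall p₀ Q := by
    intro z hz
    simp only [Set.mem_iUnion] at hz
    obtain ⟨a, haF, hza⟩ := hz
    exact hQ a (hA.mem_toFinset.mp haF) (interior_subset hza)
  have hvol : volume (closedBall p₀ Q) = ENNReal.ofReal (Q ^ d) * B := by
    rw [Measure.addHaar_closedBall_eq_addHaar_ball,
      Measure.addHaar_ball volume p₀ hQpos, finrank_euclideanSpace_fin]
  have hmain : (F.card : ℝ≥0∞) * (ENNReal.ofReal (rad ^ d) * B) ≤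
      ENNReal.ofReal (Q ^ d) * B := by
    calc (F.card : ℝ≥0∞) * (ENNReal.ofReal (rad ^ d) * B)
        = ∑ _a ∈ F, ENNReal.ofReal (rad ^ d) * B := by
          rw [Finset.sum_const, nsmul_eq_mul]
      _ ≤ ∑ a ∈ F, volume (interior (M.Jset a)) := Finset.sum_le_sum hkey
      _ = volume (⋃ a ∈ F, interior (M.Jset a)) := hsum
      _ ≤ volume (closedBall p₀ Q) := measure_mono hsub2
      _ = ENNReal.ofReal (Q ^ d) * B := hvol
  have h4 : (F.card : ℝ≥0∞) * ENNReal.ofReal (rad ^ d) ≤ ENNReal.ofReal (Q ^ d) :=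
    (ENNReal.mul_le_mul_iff_left hB0 hBtop).mp (by rwa [← mul_assoc] at hmain)
  rw [← ENNReal.ofReal_natCast, ← ENNReal.ofReal_mul (by positivity)] at h4
  have h5 : (F.card : ℝ) * rad ^ d ≤ Q ^ d :=
    (ENNReal.ofReal_le_ofReal_iff (by positivity)).mp h4
  rw [Set.ncard_eq_toFinset_card _ hA]
  exact h5

end Packing


section Contraction
open MeasureTheory
variable (M : MoranStructure d J n r) (hD : MoranData d J n r R)

/-- the constant `c₀` controlling the scale loss. -/
def cZero (R : ℝ) : ℝ := (2 / Real.log R⁻¹) ^ 2 / 2 + 1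

/-- the scale drop needed to contract a chain of length `q`. -/
def TqD (R : ℝ) (q : ℕ) : ℕ := sInf {t : ℕ | R ^ t * ((q : ℝ) + 1) ≤ 1}

omit hD in
lemma cZero_nonneg : 0 ≤ cZero R := by
  unfold cZero
  positivity

include hD in
lemma TqD_mem (q : ℕ) : R ^ TqD R q * ((q : ℝ) + 1) ≤ 1 := by
  have hne : {t : ℕ | R ^ t * ((q : ℝ) + 1) ≤ 1}.Nonempty := by
    obtain ⟨t, ht⟩ := exists_pow_lt_of_lt_one
      (show (0:ℝ) < 1/((q:ℝ)+1) by positivity) (R_lt_one hD)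
    refine ⟨t, ?_⟩
    have hq1 : (0:ℝ) < (q:ℝ) + 1 := by positivity
    rw [lt_div_iff₀ hq1] at ht
    exact ht.le
  exact Nat.sInf_mem hne

include hD in
lemma TqD_bound (q : ℕ) : (TqD R q : ℝ) ≤ (q : ℝ) / 2 + cZero R := by
  have hR := hD.R_pos
  have hR1 := R_lt_one hD
  set b := R⁻¹ with hbdef
  have hb : 1 < b := one_lt_inv_iff₀.mpr ⟨hR, hR1⟩
  set L := Real.log b with hLdef
  have hL : 0 < L := Real.log_pos hb
  set t₁ := Nat.ceil (Real.logb b ((q : ℝ) + 1)) with ht₁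
  have hq1 : (0:ℝ) < (q:ℝ) + 1 := by positivity
  have hlogbnn : 0 ≤ Real.logb b ((q:ℝ) + 1) :=
    Real.logb_nonneg hb (by push_cast; linarith)
  have hmem : R ^ t₁ * ((q : ℝ) + 1) ≤ 1 := by
    have h2 : b ^ (Real.logb b ((q:ℝ)+1)) = (q:ℝ)+1 :=
      Real.rpow_logb (by positivity) hb.ne' hq1
    have h3 : b ^ (Real.logb b ((q:ℝ)+1)) ≤ b ^ ((t₁ : ℕ) : ℝ) :=
      (Real.rpow_le_rpow_left_iff hb).mpr (Nat.le_ceil _)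
    rw [h2, Real.rpow_natCast] at h3
    have hbt : (0:ℝ) < b ^ t₁ := by positivity
    have hRt : R ^ t₁ = (b ^ t₁)⁻¹ := by
      rw [hbdef, ← inv_pow, inv_inv]
    rw [hRt, inv_mul_le_iff₀ hbt, mul_one]
    exact h3
  have hTle : (TqD R q : ℝ) ≤ (t₁ : ℝ) := by
    exact_mod_cast Nat.sInf_le hmem
  have hceil : (t₁ : ℝ) < Real.logb b ((q:ℝ)+1) + 1 := Nat.ceil_lt_add_one hlogbnn
  have hlogb : Real.logb b ((q:ℝ)+1) = Real.log ((q:ℝ)+1) / L := rfl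
  have hlog1 : Real.log ((q:ℝ)+1) ≤ 2 * Real.sqrt q := by
    have hs1 : Real.log ((q:ℝ)+1) = 2 * Real.log (Real.sqrt ((q:ℝ)+1)) := by
      rw [Real.log_sqrt hq1.le]; ring
    have hs2 : Real.log (Real.sqrt ((q:ℝ)+1)) ≤ Real.sqrt ((q:ℝ)+1) - 1 :=
      Real.log_le_sub_one_of_pos (Real.sqrt_pos.mpr hq1)
    have hs3 : Real.sqrt ((q:ℝ)+1) ≤ Real.sqrt q + 1 := by
      have h4 : ((q:ℝ)+1) ≤ (Real.sqrt q + 1)^2 := by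
        nlinarith [Real.sq_sqrt (show (0:ℝ) ≤ (q:ℝ) by positivity),
          Real.sqrt_nonneg (q:ℝ)]
      have h5 := Real.sqrt_le_sqrt h4
      rwa [Real.sqrt_sq (by positivity)] at h5
    linarith
  have hdiv : Real.log ((q:ℝ)+1) / L ≤ (2 * Real.sqrt q) / L := by
    gcongr
  have hfin : (2 * Real.sqrt q) / L ≤ (q:ℝ)/2 + (2/L)^2/2 := by
    have h6 : (2 * Real.sqrt q) / L = (2/L) * Real.sqrt q := by
      field_simp
    rw [h6]
    nlinarith [sq_nonneg (Real.sqrt q - 2/L), Real.sq_sqrt (show (0:ℝ) ≤ (q:ℝ) by positivity),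
      Real.sqrt_nonneg (q:ℝ)]
  have : cZero R = (2/L)^2/2 + 1 := by rw [cZero, hLdef, hbdef]
  linarith [hTle, hceil, hdiv, hfin, hlogb ▸ hceil]

include hD in
/-- chain contraction via volume packing. -/
lemma contraction (hd : 1 ≤ d) {x₀ : Pt d} {ρ₀ : ℝ} (hρ : 0 < ρ₀)
    (hball : ball x₀ ρ₀ ⊆ interior J) {s t q : ℕ} {u v : List ℕ}
    (hch : CH M R s q u v) (hts : t ≤ s) (hq : R ^ t * ((q : ℝ) + 1) ≤ 1) :
    ∃ q' : ℕ, (q' : ℝ) ≤ (2 * Metric.diam J / (ρ₀ * R)) ^ d ∧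
      CH M R (s - t) q' (anc r R (s - t) u) (anc r R (s - t) v) := by
  have hR := hD.R_pos
  set Kr : ℝ := (2 * Metric.diam J / (ρ₀ * R)) ^ d with hKr
  have hKrnn : 0 ≤ Kr := by
    rw [hKr]
    positivity
  set s' := s - t with hs'
  obtain ⟨f, f0, fq, fmem, fstep⟩ := hch
  rcases Nat.eq_zero_or_pos s' with h0 | hs'pos
  · rw [h0]
    refine ⟨0, by simpa using hKrnn, ?_⟩
    rw [anc_zero hD, anc_zero hD]
    exact CH_refl M hD (root_mem hD)
  · set g : ℕ → List ℕ := fun i => anc r R s' (f i) with hg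
    obtain ⟨p₀, hp₀⟩ := Jset_nonempty hD M (isWord_of_mem hD (fmem 0 (Nat.zero_le q)))
    set A : Set (List ℕ) := g '' (Set.Iic q) with hA
    have hAfin : A.Finite := (Set.finite_Iic q).image g
    have hs's : s' ≤ s := by omega
    have hgmem : ∀ i ≤ q, g i ∈ XLevel n r R s' :=
      fun i hi => anc_mem hD (fmem i hi) hs's
    have hgstep : ∀ i < q, (M.Jset (g i) ∩ M.Jset (g (i + 1))).Nonempty := by
      intro i hi
      have h1 : M.Jset (f i) ⊆ M.Jset (g i) :=
        Jset_prefix_subset hD M (List.take_prefix _ _) (isWord_of_mem hD (fmem i hi.le))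
      have h2 : M.Jset (f (i+1)) ⊆ M.Jset (g (i+1)) :=
        Jset_prefix_subset hD M (List.take_prefix _ _) (isWord_of_mem hD (fmem (i+1) hi))
      exact (fstep i hi).mono (Set.inter_subset_inter h1 h2)
    obtain ⟨q', hq'card, hch'⟩ := chain_erase M hD hAfin q
      (u := anc r R s' u) (v := anc r R s' v) g
      (show g 0 = anc r R s' u by rw [hg]; simp only []; rw [f0])
      (show g q = anc r R s' v by rw [hg]; simp only []; rw [fq])
      hgmem hgstep (fun i hi => ⟨i, hi, rfl⟩)
    set DJ := Metric.diam J with hDJ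
    have hDJnn : 0 ≤ DJ := Metric.diam_nonneg
    set Q : ℝ := ((q:ℝ) + 1) * (DJ * R ^ s) + DJ * R ^ s' with hQdef
    have hQpos : 0 ≤ Q := by
      rw [hQdef]
      positivity
    have hspread := chain_spread M hD fmem fstep hp₀
    have hQ : ∀ a ∈ A, M.Jset a ⊆ closedBall p₀ Q := by
      rintro _ ⟨i, hi, rfl⟩ z hz
      obtain ⟨w, hw⟩ := Jset_nonempty hD M (isWord_of_mem hD (fmem i hi))
      have hwg : w ∈ M.Jset (g i) :=
        Jset_prefix_subset hD M (List.take_prefix _ _) (isWord_of_mem hD (fmem i hi)) hw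
      have hwball := hspread i hi hw
      rw [mem_closedBall] at hwball ⊢
      have hdzw : dist z w ≤ DJ * R ^ s' :=
        le_trans (Metric.dist_le_diam_of_mem
          (Jset_isBounded hD M (isWord_of_mem hD (hgmem i hi))) hz hwg)
          (diam_Jset_le M hD (hgmem i hi))
      have hstep2 : ((i:ℝ) + 1) * (DJ * R ^ s) ≤ ((q:ℝ) + 1) * (DJ * R ^ s) := by
        have hiq : (i:ℝ) ≤ (q:ℝ) := by exact_mod_cast hi
        have hnn : (0:ℝ) ≤ DJ * R ^ s := by positivity
        nlinarith
      calc dist z p₀ ≤ dist z w + dist w p₀ := dist_triangle _ _ _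
        _ ≤ DJ * R ^ s' + ((i:ℝ) + 1) * (DJ * R ^ s) := add_le_add hdzw hwball
        _ ≤ DJ * R ^ s' + ((q:ℝ) + 1) * (DJ * R ^ s) := by linarith
        _ = Q := by rw [hQdef]; ring
    have hpack := packing_count M hD hd hρ hball hAfin
      (fun a ha => by
        obtain ⟨i, hi, rfl⟩ := ha
        exact hgmem i hi) hQpos hQ
    -- bound Q by `2 DJ R^{s'}`
    have hQle : Q ≤ 2 * DJ * R ^ s' := by
      have hps : R ^ s = R ^ s' * R ^ t := by
        rw [hs', pow_sub_mul_pow R hts]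
      rw [hQdef, hps]
      have hnn : (0:ℝ) ≤ DJ * R ^ s' := by positivity
      nlinarith [pow_pos hR s', pow_pos hR t]
    have hQd : Q ^ d ≤ (2 * DJ * R ^ s') ^ d := pow_le_pow_left₀ hQpos hQle d
    have hident : Kr * (ρ₀ * R ^ (s' + 1)) ^ d = (2 * DJ * R ^ s') ^ d := by
      rw [hKr, ← mul_pow]
      congr 1
      field_simp
      ring
    have hradpos : (0:ℝ) < (ρ₀ * R ^ (s' + 1)) ^ d := by positivity
    have hcard : (A.ncard : ℝ) ≤ Kr := by
      have h1 : (A.ncard : ℝ) * (ρ₀ * R ^ (s' + 1)) ^ d ≤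
          Kr * (ρ₀ * R ^ (s' + 1)) ^ d := by
        rw [hident]
        exact hpack.trans hQd
      exact le_of_mul_le_mul_right h1 hradpos
    refine ⟨q', ?_, hch'⟩
    have : (q' : ℝ) + 1 ≤ (A.ncard : ℝ) := by exact_mod_cast hq'card
    linarith

end Contraction


section Final
variable (M : MoranStructure d J n r) (hD : MoranData d J n r R)
include hD

lemma good_scale (hd : 1 ≤ d) {x₀ : Pt d} {ρ₀ : ℝ} (hρ : 0 < ρ₀)
    (hball : ball x₀ ρ₀ ⊆ interior J) {K : ℕ}
    (hK : (2 * Metric.diam J / (ρ₀ * R)) ^ d ≤ (K : ℝ))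
    {x y : List ℕ} {a b : ℕ} (hx : x ∈ XLevel n r R a) (hy : y ∈ XLevel n r R b) :
    ∃ s : ℕ, s ≤ a ∧ s ≤ b ∧
      gromovD (AugGraph M R) [] x y ≤ (s : ℝ) + cZero R ∧
      CH M R s K (anc r R s x) (anc r R s y) := by
  have hgd : gromovD (AugGraph M R) [] x y =
      ((a:ℝ) + (b:ℝ) - ((AugGraph M R).dist x y : ℝ)) / 2 := by
    rw [gromovD, dist_root M hD hx, dist_root M hD hy]
  obtain ⟨Wx, hWx⟩ := walk_up' M hD hx (Nat.zero_le a)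
  obtain ⟨Wy, hWy⟩ := walk_up' M hD hy (Nat.zero_le b)
  have hreach : (AugGraph M R).Reachable x y := by
    have h1 : (AugGraph M R).Reachable x [] := ⟨Wx.copy rfl (anc_zero hD x)⟩
    have h2 : (AugGraph M R).Reachable y [] := ⟨Wy.copy rfl (anc_zero hD y)⟩
    exact h1.trans h2.symm
  obtain ⟨P, hP⟩ := hreach.exists_walk_length_eq_dist
  obtain ⟨s₀, q, hs₀a, hs₀b, hch, hbd⟩ := walk_chain M hD P hx hy
  rw [hP] at hbd
  have hg2 : gromovD (AugGraph M R) [] x y ≤ (s₀:ℝ) - (q:ℝ)/2 := by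
    rw [hgd]
    have hbd' : (q:ℝ) + ((a:ℝ) - (s₀:ℝ)) + ((b:ℝ) - (s₀:ℝ)) ≤
        ((AugGraph M R).dist x y : ℝ) := by exact_mod_cast hbd
    linarith
  set t := TqD R q with ht
  have htq := TqD_mem hD q
  have htb := TqD_bound hD q
  by_cases hts : t ≤ s₀
  · obtain ⟨q', hq'le, hch'⟩ := contraction M hD hd hρ hball hch hts htq
    have e1 : anc r R (s₀ - t) (anc r R s₀ x) = anc r R (s₀ - t) x :=
      anc_anc hD (by omega) hx hs₀a
    have e2 : anc r R (s₀ - t) (anc r R s₀ y) = anc r R (s₀ - t) y :=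
      anc_anc hD (by omega) hy hs₀b
    rw [e1, e2] at hch'
    have hq'K : q' ≤ K := by
      have h3 : (q' : ℝ) ≤ (K : ℝ) := hq'le.trans hK
      exact_mod_cast h3
    refine ⟨s₀ - t, by omega, by omega, ?_, CH_pad M hD hch' hq'K⟩
    have hcast : ((s₀ - t : ℕ) : ℝ) = (s₀ : ℝ) - (t : ℝ) := by
      rw [Nat.cast_sub hts]
    rw [hcast]
    have hq0 : (0:ℝ) ≤ (q:ℝ) := by positivity
    linarith
  · refine ⟨0, Nat.zero_le a, Nat.zero_le b, ?_, ?_⟩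
    · have hlt : (s₀ : ℝ) < (t : ℝ) := by exact_mod_cast (by omega : s₀ < t)
      push_cast
      linarith
    · rw [anc_zero hD, anc_zero hD]
      exact CH_pad M hD (CH_refl M hD (root_mem hD)) (Nat.zero_le K)

lemma gromov_ge {x y : List ℕ} {a b s q : ℕ} (hx : x ∈ XLevel n r R a)
    (hy : y ∈ XLevel n r R b) (hsa : s ≤ a) (hsb : s ≤ b)
    (hch : CH M R s q (anc r R s x) (anc r R s y)) :
    (s : ℝ) - (q:ℝ)/2 ≤ gromovD (AugGraph M R) [] x y := by
  have hdle := dist_le_of_CH M hD hx hy hsa hsb hch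
  rw [gromovD, dist_root M hD hx, dist_root M hD hy]
  zify [hsa, hsb] at hdle
  have h2 : ((AugGraph M R).dist x y : ℝ) ≤ ((a:ℝ) - s) + ((b:ℝ) - s) + q := by
    exact_mod_cast hdle
  linarith

end Final


end S3
end MoranPaper


end
/-- the induced augmented tree of a Moran set is Gromov hyperbolic. -/
theorem MoranPaper.statement3 (d : ℕ) (J : Set (MoranPaper.Pt d)) (n : ℕ → ℕ) (r : ℕ → ℝ)
    (R : ℝ) (hD : MoranPaper.MoranData d J n r R) (M : MoranPaper.MoranStructure d J n r) :
    ∃ δ : ℝ, 0 ≤ δ ∧ ∀ x ∈ MoranPaper.XV n r R, ∀ y ∈ MoranPaper.XV n r R,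
      ∀ z ∈ MoranPaper.XV n r R,
      min (MoranPaper.gromovD (MoranPaper.AugGraph M R) [] x z)
          (MoranPaper.gromovD (MoranPaper.AugGraph M R) [] z y) - δ
        ≤ MoranPaper.gromovD (MoranPaper.AugGraph M R) [] x y := by
  
  classical
  have hd : 1 ≤ d := hD.dim_pos
  obtain ⟨x₀, ρ₀, hρ, hball⟩ := MoranPaper.S3.exists_ball_subset hD
  set K := Nat.ceil ((2 * Metric.diam J / (ρ₀ * R)) ^ d) with hKdef
  have hK : (2 * Metric.diam J / (ρ₀ * R)) ^ d ≤ (K : ℝ) := Nat.le_ceil _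
  refine ⟨MoranPaper.S3.cZero R + K, ?_, ?_⟩
  · have h0 := MoranPaper.S3.cZero_nonneg (R := R)
    positivity
  · intro x hxX y hyX z hzX
    obtain ⟨a, hx⟩ := Set.mem_iUnion.mp hxX
    obtain ⟨b, hy⟩ := Set.mem_iUnion.mp hyX
    obtain ⟨c, hz⟩ := Set.mem_iUnion.mp hzX
    obtain ⟨s₁, hs₁a, hs₁c, hg1, hch1⟩ :=
      MoranPaper.S3.good_scale M hD hd hρ hball hK hx hz
    obtain ⟨s₂, hs₂c, hs₂b, hg2, hch2⟩ :=
      MoranPaper.S3.good_scale M hD hd hρ hball hK hz hy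
    set s := min s₁ s₂ with hs
    have hp1 : MoranPaper.S3.CH M R s K (MoranPaper.S3.anc r R s x)
        (MoranPaper.S3.anc r R s z) := by
      have h := MoranPaper.S3.CH_proj M hD hch1 (min_le_left s₁ s₂)
      rwa [MoranPaper.S3.anc_anc hD (min_le_left s₁ s₂) hx hs₁a,
        MoranPaper.S3.anc_anc hD (min_le_left s₁ s₂) hz hs₁c] at h
    have hp2 : MoranPaper.S3.CH M R s K (MoranPaper.S3.anc r R s z)
        (MoranPaper.S3.anc r R s y) := by
      have h := MoranPaper.S3.CH_proj M hD hch2 (min_le_right s₁ s₂)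
      rwa [MoranPaper.S3.anc_anc hD (min_le_right s₁ s₂) hz hs₂c,
        MoranPaper.S3.anc_anc hD (min_le_right s₁ s₂) hy hs₂b] at h
    have hch3 := MoranPaper.S3.CH_trans M hD hp1 hp2
    have hge := MoranPaper.S3.gromov_ge M hD hx hy
      ((min_le_left s₁ s₂).trans hs₁a) ((min_le_right s₁ s₂).trans hs₂b) hch3
    have hmin : min (MoranPaper.gromovD (MoranPaper.AugGraph M R) [] x z)
        (MoranPaper.gromovD (MoranPaper.AugGraph M R) [] z y) ≤
        (s : ℝ) + MoranPaper.S3.cZero R := by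
      rcases le_total s₁ s₂ with h | h
      · have he : s = s₁ := min_eq_left h
        have h1 := min_le_left (MoranPaper.gromovD (MoranPaper.AugGraph M R) [] x z)
          (MoranPaper.gromovD (MoranPaper.AugGraph M R) [] z y)
        rw [he]
        exact h1.trans hg1
      · have he : s = s₂ := min_eq_right h
        have h1 := min_le_right (MoranPaper.gromovD (MoranPaper.AugGraph M R) [] x z)
          (MoranPaper.gromovD (MoranPaper.AugGraph M R) [] z y)
        rw [he]
        exact h1.trans hg2
    have hcast : ((K + K : ℕ) : ℝ) / 2 = (K : ℝ) := by push_cast; ring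
    rw [hcast] at hge
    linarith
end

section
/- An augmented tree (X, 𝔈) is hyperbolic (there exists δ ≥ 0 with ⟨x,y⟩ ≥ min(⟨x,z⟩, ⟨z,y⟩) − δ for all x, y, z ∈ X) if and only if there exists k ∈ ℕ such that every horizontal geodesic has length at most k. -/
open Metric Set Filter

attribute [local instance] Classical.propDecidable

noncomputable section

namespace MoranPaper.AugmentedTree

variable {V : Type*} (T : MoranPaper.AugmentedTree V)

/-- The horizontal graph. -/
def hor : SimpleGraph V where
  Adj := T.Eh
  symm := ⟨fun x y h => T.Eh_symm x y h⟩
  loopless := ⟨fun x h => T.Eh_ne x x h rfl⟩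

/-- `j`-fold parent. -/
def up (j : ℕ) (x : V) : V := T.parent^[j] x

lemma up_zero (x : V) : T.up 0 x = x := rfl

lemma up_succ (j : ℕ) (x : V) : T.up (j + 1) x = T.parent (T.up j x) :=
  Function.iterate_succ_apply' _ _ _

lemma up_succ' (j : ℕ) (x : V) : T.up (j + 1) x = T.up j (T.parent x) :=
  Function.iterate_succ_apply _ _ _

lemma up_add (i j : ℕ) (x : V) : T.up (i + j) x = T.up i (T.up j x) :=
  Function.iterate_add_apply _ _ _ _

lemma root_of_lvl_eq_zero {x : V} (h : T.lvl x = 0) : x = T.root := by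
  by_contra hx
  have := T.lvl_parent x hx
  omega

lemma lvl_up {j : ℕ} {x : V} (h : j ≤ T.lvl x) : T.lvl (T.up j x) = T.lvl x - j := by
  induction j with
  | zero => simp [up_zero]
  | succ j ih =>
    have hj : j ≤ T.lvl x := by omega
    have h1 : T.lvl (T.up j x) = T.lvl x - j := ih hj
    have hne : T.up j x ≠ T.root := by
      intro he
      rw [he, T.lvl_root] at h1
      omega
    have := T.lvl_parent _ hne
    rw [up_succ]
    omega

lemma eh_up {x y : V} (h : T.Eh x y) (j : ℕ) :
    T.up j x = T.up j y ∨ T.Eh (T.up j x) (T.up j y) := by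
  induction j with
  | zero => exact Or.inr h
  | succ j ih =>
    rcases ih with he | he
    · rw [up_succ, up_succ, he]; exact Or.inl rfl
    · rw [up_succ, up_succ]
      exact T.Eh_parent _ _ he

/-- Projecting a horizontal walk one level up. -/
lemma hor_walk_parent {a b : V} (w : T.hor.Walk a b) :
    ∃ w' : T.hor.Walk (T.parent a) (T.parent b), w'.length ≤ w.length := by
  induction w with
  | nil => exact ⟨.nil, le_rfl⟩
  | @cons a c b h w ih =>
    obtain ⟨w', hw'⟩ := ih
    rcases T.Eh_parent _ _ h with he | he
    · exact ⟨w'.copy he.symm rfl, by simpa using hw'.trans (by simp)⟩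
    · exact ⟨.cons he w', by change w'.length + 1 ≤ w.length + 1; omega⟩

lemma hor_walk_up (j : ℕ) {a b : V} (w : T.hor.Walk a b) :
    ∃ w' : T.hor.Walk (T.up j a) (T.up j b), w'.length ≤ w.length := by
  induction j with
  | zero => exact ⟨w.copy (T.up_zero a).symm (T.up_zero b).symm, by simp⟩
  | succ j ih =>
    obtain ⟨w', hw'⟩ := ih
    obtain ⟨w'', hw''⟩ := T.hor_walk_parent w'
    exact ⟨w''.copy (T.up_succ j a).symm (T.up_succ j b).symm,
      by simpa using hw''.trans hw'⟩

lemma adj_of_eh {x y : V} (h : T.Eh x y) : T.graph.Adj x y :=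
  ⟨T.Eh_ne _ _ h, Or.inr h⟩

/-- Converting a horizontal walk into a walk of the full graph with all darts horizontal. -/
lemma hor_walk_to_graph {a b : V} (w : T.hor.Walk a b) :
    ∃ p : T.graph.Walk a b, p.length = w.length ∧
      ∀ e ∈ p.darts, T.Eh e.toProd.1 e.toProd.2 := by
  induction w with
  | nil => exact ⟨.nil, rfl, by simp⟩
  | @cons a c b h w ih =>
    obtain ⟨p, hl, hd⟩ := ih
    refine ⟨.cons (T.adj_of_eh h) p, by simpa using hl, ?_⟩
    intro e he
    rw [SimpleGraph.Walk.darts_cons, List.mem_cons] at he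
    rcases he with he | he
    · subst he; exact h
    · exact hd e he

/-- A vertical walk from `x` to its `j`-fold parent. -/
lemma walk_up {j : ℕ} {x : V} (h : j ≤ T.lvl x) :
    ∃ p : T.graph.Walk x (T.up j x), p.length = j := by
  induction j with
  | zero => exact ⟨.nil, rfl⟩
  | succ j ih =>
    obtain ⟨p, hp⟩ := ih (by omega)
    have h1 : T.lvl (T.up j x) = T.lvl x - j := T.lvl_up (by omega)
    have hne : T.up j x ≠ T.root := by
      intro he; rw [he, T.lvl_root] at h1; omega
    have h2 : T.lvl (T.parent (T.up j x)) + 1 = T.lvl (T.up j x) := T.lvl_parent _ hne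
    have hadj : T.graph.Adj (T.up j x) (T.up (j + 1) x) := by
      rw [up_succ]
      refine ⟨fun he => ?_, Or.inl (Or.inl ⟨hne, rfl⟩)⟩
      rw [← he] at h2; omega
    exact ⟨p.concat hadj, by rw [SimpleGraph.Walk.length_concat, hp]⟩

lemma reach_root : ∀ n (x : V), T.lvl x ≤ n → T.graph.Reachable x T.root := by
  intro n
  induction n with
  | zero =>
    intro x hx
    rw [T.root_of_lvl_eq_zero (x := x) (Nat.le_zero.mp hx)]
  | succ n ih =>
    intro x hx
    by_cases hr : x = T.root
    · rw [hr]
    · have h2 := T.lvl_parent x hr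
      have hadj : T.graph.Adj x (T.parent x) := by
        refine ⟨fun he => ?_, Or.inl (Or.inl ⟨hr, rfl⟩)⟩
        rw [← he] at h2; omega
      exact hadj.reachable.trans (ih (T.parent x) (by omega))

lemma graph_connected : T.graph.Connected := by
  have : Nonempty V := ⟨T.root⟩
  refine SimpleGraph.Connected.mk fun x y => ?_
  exact (T.reach_root (T.lvl x) x le_rfl).trans (T.reach_root (T.lvl y) y le_rfl).symm

lemma adj_lvl {x y : V} (h : T.graph.Adj x y) :
    T.lvl x ≤ T.lvl y + 1 ∧ T.lvl y ≤ T.lvl x + 1 := by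
  obtain ⟨-, (⟨hx, hp⟩ | ⟨hy, hp⟩) | he⟩ := h
  · have := T.lvl_parent x hx; rw [hp] at this; omega
  · have := T.lvl_parent y hy; rw [hp] at this; omega
  · rw [T.Eh_lvl _ _ he]; omega

lemma walk_lvl {x y : V} (p : T.graph.Walk x y) :
    T.lvl x ≤ T.lvl y + p.length ∧ T.lvl y ≤ T.lvl x + p.length := by
  induction p with
  | nil => simp
  | @cons a c b h p ih =>
    have := T.adj_lvl h
    simp only [SimpleGraph.Walk.length_cons]
    omega

/-- Upper bound on the distance through a given level. -/
lemma dist_le_through {x y : V} {t : ℕ} (hx : t ≤ T.lvl x) (hy : t ≤ T.lvl y)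
    (w : T.hor.Walk (T.up (T.lvl x - t) x) (T.up (T.lvl y - t) y)) :
    T.graph.dist x y ≤ (T.lvl x - t) + w.length + (T.lvl y - t) := by
  obtain ⟨p1, hp1⟩ := T.walk_up (j := T.lvl x - t) (x := x) (by omega)
  obtain ⟨p2, hp2⟩ := T.walk_up (j := T.lvl y - t) (x := y) (by omega)
  obtain ⟨ph, hph, -⟩ := T.hor_walk_to_graph w
  have := SimpleGraph.dist_le (p1.append (ph.append p2.reverse))
  simpa [SimpleGraph.Walk.length_append, SimpleGraph.Walk.length_reverse,
    hp1, hp2, hph, add_assoc] using this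

/-- Structure of walks: every walk dominates a "canonical" path through some level. -/
lemma walk_structure {x y : V} (p : T.graph.Walk x y) :
    ∃ t, t ≤ T.lvl x ∧ t ≤ T.lvl y ∧
      ∃ w : T.hor.Walk (T.up (T.lvl x - t) x) (T.up (T.lvl y - t) y),
        (T.lvl x - t) + (T.lvl y - t) + w.length ≤ p.length := by
  induction p with
  | @nil u =>
    exact ⟨T.lvl u, le_rfl, le_rfl, (SimpleGraph.Walk.nil (u := u)).copy (by simp [up_zero]) (by simp [up_zero]), by simp⟩
  | @cons x v y h q ih =>
    obtain ⟨t, htv, hty, w, hw⟩ := ih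
    obtain ⟨-, (⟨hx, hp⟩ | ⟨hv, hp⟩) | he⟩ := h
    · -- v = T.parent x
      have hlvl := T.lvl_parent x hx
      rw [hp] at hlvl
      have htx : t ≤ T.lvl x := by omega
      have key : T.up (T.lvl x - t) x = T.up (T.lvl v - t) v := by
        have : T.lvl x - t = (T.lvl v - t) + 1 := by omega
        rw [this, up_succ', hp]
      exact ⟨t, htx, hty, w.copy key.symm rfl, by
        simp only [SimpleGraph.Walk.length_copy]; change _ ≤ q.length + 1; omega⟩
    · -- x = T.parent v
      have hlvl := T.lvl_parent v hv
      rw [hp] at hlvl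
      by_cases htx : t ≤ T.lvl x
      · have key : T.up (T.lvl x - t) x = T.up (T.lvl v - t) v := by
          have h1 : T.lvl v - t = (T.lvl x - t) + 1 := by omega
          rw [h1, up_succ', hp]
        exact ⟨t, htx, hty, w.copy key.symm rfl, by
          simp only [SimpleGraph.Walk.length_copy]; change _ ≤ q.length + 1; omega⟩
      · -- t = lvl v = lvl x + 1
        have ht : t = T.lvl v := by omega
        have hv0 : T.up (T.lvl v - t) v = v := by rw [ht]; simp [up_zero]
        obtain ⟨w', hw'⟩ := T.hor_walk_parent (w.copy hv0 rfl)
        set t' := T.lvl x with ht'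
        have hxkey : T.parent v = T.up (T.lvl x - t') x := by
          rw [hp, Nat.sub_self, up_zero]
        have hykey : T.parent (T.up (T.lvl y - t) y) = T.up (T.lvl y - t') y := by
          rw [← up_succ]
          congr 1
          omega
        refine ⟨t', le_rfl, by omega, (w'.copy hxkey hykey), ?_⟩
        simp only [SimpleGraph.Walk.length_copy]
        rw [SimpleGraph.Walk.length_copy] at hw'
        change _ ≤ q.length + 1
        omega
    · -- Eh x v
      have hlvl : T.lvl x = T.lvl v := T.Eh_lvl _ _ he
      have htx : t ≤ T.lvl x := by omega
      have hde : T.lvl x - t = T.lvl v - t := by omega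
      rcases T.eh_up he (T.lvl x - t) with heq | hadj
      · have key : T.up (T.lvl x - t) x = T.up (T.lvl v - t) v := by rw [heq, hde]
        exact ⟨t, htx, hty, w.copy key.symm rfl, by
          simp only [SimpleGraph.Walk.length_copy]; change _ ≤ q.length + 1; omega⟩
      · have hadj' : T.hor.Adj (T.up (T.lvl x - t) x) (T.up (T.lvl v - t) v) := by
          rw [← hde]; exact hadj
        exact ⟨t, htx, hty, .cons hadj' w, by
          change _ + (w.length + 1) ≤ q.length + 1; omega⟩

end MoranPaper.AugmentedTree
namespace MoranPaper.AugmentedTree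

variable {V : Type*} (T : MoranPaper.AugmentedTree V)

/-- Key structural lemma: for any `x, y` there is a level `t` realizing the distance,
at which the horizontal part is a horizontal geodesic (hence of length `≤ k`). -/
lemma exists_level (k : ℕ)
    (hk : ∀ (x y : V) (p : T.graph.Walk x y),
      (∀ e ∈ p.darts, T.Eh e.toProd.1 e.toProd.2) →
      p.length = T.graph.dist x y → p.length ≤ k)
    (x y : V) :
    ∃ t, t ≤ T.lvl x ∧ t ≤ T.lvl y ∧
      (T.lvl x - t) + (T.lvl y - t) ≤ T.graph.dist x y ∧
      ∃ w : T.hor.Walk (T.up (T.lvl x - t) x) (T.up (T.lvl y - t) y), w.length ≤ k := by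
  obtain ⟨p, hp⟩ := (T.graph_connected.preconnected x y).exists_walk_length_eq_dist
  obtain ⟨t, htx, hty, w, hw⟩ := T.walk_structure p
  rw [hp] at hw
  have hub := T.dist_le_through htx hty w
  -- `w` realizes the distance between the two ancestors
  obtain ⟨pw, hpw, hpd⟩ := T.hor_walk_to_graph w
  have hle : T.graph.dist (T.up (T.lvl x - t) x) (T.up (T.lvl y - t) y) ≤ w.length := by
    rw [← hpw]; exact SimpleGraph.dist_le pw
  obtain ⟨p1, hp1⟩ := T.walk_up (j := T.lvl x - t) (x := x) (by omega)
  obtain ⟨p2, hp2⟩ := T.walk_up (j := T.lvl y - t) (x := y) (by omega)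
  have htri : T.graph.dist x y ≤ (T.lvl x - t) +
      (T.graph.dist (T.up (T.lvl x - t) x) (T.up (T.lvl y - t) y) + (T.lvl y - t)) := by
    calc T.graph.dist x y ≤ T.graph.dist x (T.up (T.lvl x - t) x) +
        T.graph.dist (T.up (T.lvl x - t) x) y := T.graph_connected.dist_triangle
      _ ≤ T.graph.dist x (T.up (T.lvl x - t) x) +
          (T.graph.dist (T.up (T.lvl x - t) x) (T.up (T.lvl y - t) y) +
            T.graph.dist (T.up (T.lvl y - t) y) y) := by
            exact Nat.add_le_add_left T.graph_connected.dist_triangle _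
      _ ≤ _ := by
            have hxx : T.graph.dist x (T.up (T.lvl x - t) x) ≤ T.lvl x - t :=
              le_trans (SimpleGraph.dist_le p1) (le_of_eq hp1)
            have hyy : T.graph.dist (T.up (T.lvl y - t) y) y ≤ T.lvl y - t := by
              rw [SimpleGraph.dist_comm]
              exact le_trans (SimpleGraph.dist_le p2) (le_of_eq hp2)
            omega
  have heq : w.length = T.graph.dist (T.up (T.lvl x - t) x) (T.up (T.lvl y - t) y) := by
    omega
  have hwk : w.length ≤ k := by
    have := hk _ _ pw hpd (by rw [hpw, heq])
    omega
  exact ⟨t, htx, hty, by omega, w, hwk⟩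

lemma gromov_le {a b : V} {s : ℕ} (ha : s ≤ T.lvl a) (hb : s ≤ T.lvl b)
    (h : (T.lvl a - s) + (T.lvl b - s) ≤ T.graph.dist a b) : T.gromov a b ≤ s := by
  have hn : T.lvl a + T.lvl b ≤ T.graph.dist a b + 2 * s := by omega
  have hr : ((T.lvl a : ℝ) + T.lvl b) ≤ (T.graph.dist a b : ℝ) + 2 * s := by
    exact_mod_cast hn
  rw [gromov]
  linarith

lemma le_gromov {a b : V} {s c : ℕ} (ha : s ≤ T.lvl a) (hb : s ≤ T.lvl b)
    (h : T.graph.dist a b ≤ (T.lvl a - s) + (T.lvl b - s) + 2 * c) :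
    (s : ℝ) - c ≤ T.gromov a b := by
  have hn : T.graph.dist a b + 2 * s ≤ T.lvl a + T.lvl b + 2 * c := by omega
  have hr : (T.graph.dist a b : ℝ) + 2 * s ≤ (T.lvl a : ℝ) + T.lvl b + 2 * c := by
    exact_mod_cast hn
  rw [gromov]
  linarith

/-- Bounded horizontal geodesics imply hyperbolicity (with `δ = k`). -/
lemma hyperbolic_of_bounded (k : ℕ)
    (hk : ∀ (x y : V) (p : T.graph.Walk x y),
      (∀ e ∈ p.darts, T.Eh e.toProd.1 e.toProd.2) →
      p.length = T.graph.dist x y → p.length ≤ k) :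
    T.Hyperbolic := by
  refine ⟨(k : ℝ), Nat.cast_nonneg k, fun x y z => ?_⟩
  obtain ⟨t1, h1x, h1z, hd1, w1, hw1⟩ := T.exists_level k hk x z
  obtain ⟨t2, h2z, h2y, hd2, w2, hw2⟩ := T.exists_level k hk z y
  set t := min t1 t2 with htdef
  obtain ⟨w1', hw1'⟩ := T.hor_walk_up (t1 - t) w1
  obtain ⟨w2', hw2'⟩ := T.hor_walk_up (t2 - t) w2
  have ex : T.up (t1 - t) (T.up (T.lvl x - t1) x) = T.up (T.lvl x - t) x := by
    rw [← up_add]; congr 1; omega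
  have ez1 : T.up (t1 - t) (T.up (T.lvl z - t1) z) = T.up (T.lvl z - t) z := by
    rw [← up_add]; congr 1; omega
  have ez2 : T.up (t2 - t) (T.up (T.lvl z - t2) z) = T.up (T.lvl z - t) z := by
    rw [← up_add]; congr 1; omega
  have ey : T.up (t2 - t) (T.up (T.lvl y - t2) y) = T.up (T.lvl y - t) y := by
    rw [← up_add]; congr 1; omega
  obtain ⟨w3, hlen3⟩ : ∃ w3 : T.hor.Walk (T.up (T.lvl x - t) x) (T.up (T.lvl y - t) y),
      w3.length ≤ 2 * k :=
    ⟨(w1'.copy ex ez1).append ((w2'.copy ez2 ey)), by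
      rw [SimpleGraph.Walk.length_append, SimpleGraph.Walk.length_copy,
        SimpleGraph.Walk.length_copy]
      omega⟩
  have hub := T.dist_le_through (t := t) (by omega) (by omega) w3
  have hgxy : (t : ℝ) - k ≤ T.gromov x y :=
    T.le_gromov (by omega) (by omega) (by omega)
  have hgxz : T.gromov x z ≤ t1 := T.gromov_le h1x h1z hd1
  have hgzy : T.gromov z y ≤ t2 := T.gromov_le h2z h2y hd2
  have hmin : min (T.gromov x z) (T.gromov z y) ≤ (t : ℝ) := by
    have : (t : ℝ) = min (t1 : ℝ) (t2 : ℝ) := by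
      rw [htdef]; push_cast [Nat.cast_min]; rfl
    rw [this]
    exact min_le_min hgxz hgzy
  linarith

lemma walk_lvl_eq {x y : V} (p : T.graph.Walk x y)
    (hd : ∀ e ∈ p.darts, T.Eh e.toProd.1 e.toProd.2) : T.lvl x = T.lvl y := by
  induction p with
  | nil => rfl
  | @cons a c b h q ih =>
    have h1 : T.Eh a c := hd ⟨(a, c), h⟩ (by
      rw [SimpleGraph.Walk.darts_cons]; exact List.mem_cons_self)
    have h2 := ih (fun e he => hd e (by
      rw [SimpleGraph.Walk.darts_cons]; exact List.mem_cons_of_mem _ he))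
    rw [T.Eh_lvl a c h1, h2]

lemma walk_split {x y : V} (p : T.graph.Walk x y)
    (hd : ∀ e ∈ p.darts, T.Eh e.toProd.1 e.toProd.2) :
    ∀ i, i ≤ p.length → ∃ z, T.lvl z = T.lvl x ∧
      T.graph.dist x z ≤ i ∧ T.graph.dist z y ≤ p.length - i := by
  induction p with
  | @nil u =>
    intro i hi
    have hi0 : i = 0 := by simpa using hi
    subst hi0
    exact ⟨u, rfl, by simp [SimpleGraph.dist_self], by simp [SimpleGraph.dist_self]⟩
  | @cons a c b h q ih =>
    intro i hi
    have h1 : T.Eh a c := hd ⟨(a, c), h⟩ (by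
      rw [SimpleGraph.Walk.darts_cons]; exact List.mem_cons_self)
    have hd' : ∀ e ∈ q.darts, T.Eh e.toProd.1 e.toProd.2 := fun e he => hd e (by
      rw [SimpleGraph.Walk.darts_cons]; exact List.mem_cons_of_mem _ he)
    cases i with
    | zero =>
      refine ⟨a, rfl, by simp, ?_⟩
      simpa using SimpleGraph.dist_le (SimpleGraph.Walk.cons h q)
    | succ j =>
      obtain ⟨z, hz, hz1, hz2⟩ := ih hd' j (by
        simpa [SimpleGraph.Walk.length_cons] using hi)
      refine ⟨z, hz.trans (T.Eh_lvl a c h1).symm, ?_, ?_⟩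
      · have htri : T.graph.dist a z ≤ T.graph.dist a c + T.graph.dist c z :=
          T.graph_connected.dist_triangle
        have hac : T.graph.dist a c ≤ 1 := by
          simpa using SimpleGraph.dist_le (SimpleGraph.Walk.cons h SimpleGraph.Walk.nil)
        omega
      · simpa [SimpleGraph.Walk.length_cons] using hz2

end MoranPaper.AugmentedTree

/-- an augmented tree is hyperbolic iff the lengths of its horizontal
geodesics are uniformly bounded. -/
theorem MoranPaper.statement5 {V : Type*} (T : MoranPaper.AugmentedTree V) :
    T.Hyperbolic ↔
    ∃ k : ℕ, ∀ (x y : V) (p : T.graph.Walk x y),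
      (∀ e ∈ p.darts, T.Eh e.toProd.1 e.toProd.2) →
      p.length = T.graph.dist x y → p.length ≤ k := by
  constructor
  · rintro ⟨δ, hδ0, hδ⟩
    refine ⟨⌈4 * δ + 1⌉₊, fun x y p hd hlen => ?_⟩
    obtain ⟨z, hz, h1, h2⟩ := T.walk_split p hd (p.length / 2) (Nat.div_le_self _ _)
    have hxy : T.lvl x = T.lvl y := T.walk_lvl_eq p hd
    set L := p.length with hL
    have c1 : (T.graph.dist x z : ℝ) ≤ ((L / 2 : ℕ) : ℝ) := by exact_mod_cast h1
    have c2 : (T.graph.dist z y : ℝ) ≤ ((L - L / 2 : ℕ) : ℝ) := by exact_mod_cast h2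
    have c3 : 2 * ((L / 2 : ℕ) : ℝ) ≤ (L : ℝ) := by
      exact_mod_cast (by omega : 2 * (L / 2) ≤ L)
    have c4 : 2 * ((L - L / 2 : ℕ) : ℝ) ≤ (L : ℝ) + 1 := by
      exact_mod_cast (by omega : 2 * (L - L / 2) ≤ L + 1)
    have H := hδ x y z
    simp only [MoranPaper.AugmentedTree.gromov] at H
    have e1 : (T.lvl z : ℝ) = (T.lvl x : ℝ) := by rw [hz]
    have e2 : (T.lvl y : ℝ) = (T.lvl x : ℝ) := by rw [hxy]
    have e3 : (T.graph.dist x y : ℝ) = (L : ℝ) := by rw [← hlen]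
    have hminA : (T.lvl x : ℝ) - ((L : ℝ) + 1) / 4 ≤
        ((T.lvl x : ℝ) + (T.lvl z : ℝ) - (T.graph.dist x z : ℝ)) / 2 := by
      rw [e1]; linarith
    have hminB : (T.lvl x : ℝ) - ((L : ℝ) + 1) / 4 ≤
        ((T.lvl z : ℝ) + (T.lvl y : ℝ) - (T.graph.dist z y : ℝ)) / 2 := by
      rw [e1, e2]; linarith
    have final : (L : ℝ) ≤ 4 * δ + 1 := by
      have hmin := le_min hminA hminB
      linarith [H, hmin]
    have : (L : ℝ) ≤ (⌈4 * δ + 1⌉₊ : ℝ) := final.trans (Nat.le_ceil _)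
    exact_mod_cast this
  · rintro ⟨k, hk⟩
    exact T.hyperbolic_of_bounded k hk
end
end
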